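/- arXiv:1911.07626 — 6 statements merged into one kernel-verified Lean document; each statement's English description precedes it below -/
import Mathlib

section
/- Neural feature repopulation (Theorem 3, weight-kernel form): For ℓ = 1,…,L let ρ₀^(ℓ) be a probability measure on Z^(ℓ) mutually absolutely continuous with ρ^(ℓ), and fix versions of the densities p^(ℓ) = dρ^(ℓ)/dρ₀^(ℓ) with 0 < p^(ℓ) < ∞ everywhere; set p^(0) ≡ 1. Define the repopulated weights w̃^(ℓ)(z,ζ) = w^(ℓ)(z,ζ) · p^(ℓ−1)(ζ) and ũ(z) = u(z) · p^(L)(z), and let f̃^(ℓ) and f̃ denote the layer functions and output computed from the measures ρ₀^(ℓ), kernels w̃^(ℓ) and top weights ũ. Then: (i) f̃^(ℓ)(z;x) = f^(ℓ)(z;x) for every ℓ, z, x, and f̃(x) = f(x) for every x; (ii) for measurable r₁, r₂ : ℝ → ℝ and r^(u) : ℝ^K → ℝ and every ℓ, ∫ r₂( ∫ r₁( w^(ℓ)(z,ζ) ) dρ^(ℓ)(z) ) dρ^(ℓ−1)(ζ) = ∫ r₂( ∫ r₁( w̃^(ℓ)(z,ζ) / p^(ℓ−1)(ζ) ) p^(ℓ)(z)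 dρ₀^(ℓ)(z) ) p^(ℓ−1)(ζ) dρ₀^(ℓ−1)(ζ), and ∫ r^(u)( u(z) ) dρ^(L)(z) = ∫ r^(u)( ũ(z) / p^(L)(z) ) p^(L)(z) dρ₀^(L)(z), whenever these integrals are absolutely convergent. -/
open MeasureTheory
open scoped ENNReal NNReal BigOperators

/-- Node space of a DNN: layer `0` is the input index set `Fin d`; for `ℓ ≥ 0`,
`Node d Z (ℓ+1) = Z ℓ` is the node space of hidden layer `ℓ+1`. -/
def Node (d : ℕ) (Z : ℕ → Type) : ℕ → Type
  | 0 => Fin d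
  | ℓ + 1 => Z ℓ

instance nodeMeasurableSpace (d : ℕ) (Z : ℕ → Type) [∀ ℓ, MeasurableSpace (Z ℓ)] :
    ∀ ℓ, MeasurableSpace (Node d Z ℓ)
  | 0 => inferInstanceAs (MeasurableSpace (Fin d))
  | ℓ + 1 => inferInstanceAs (MeasurableSpace (Z ℓ))

variable {d : ℕ} {Z : ℕ → Type} [∀ ℓ, MeasurableSpace (Z ℓ)]

/-- The layer functions `f^{(ℓ)}(·;x)` of the continuous DNN. -/
noncomputable def ffun (ρ : ∀ ℓ, Measure (Z ℓ))
    (w : ∀ ℓ : ℕ, Node d Z (ℓ + 1) → Node d Z ℓ → ℝ)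
    (hact : ℕ → ℝ → ℝ) (x : Fin d → ℝ) : (ℓ : ℕ) → Node d Z ℓ → ℝ
  | 0, ζ => x ζ
  | 1, z => hact 1 ((d : ℝ)⁻¹ * ∑ j : Fin d, w 0 z j * x j)
  | ℓ + 2, z => hact (ℓ + 2) (∫ ζ, w (ℓ + 1) z ζ * ffun ρ w hact x (ℓ + 1) ζ ∂(ρ ℓ))

/-- `gfun ρ w hact x ℓ` is the pre-activation `g^{(ℓ+1)}(·;x)` of the continuous DNN. -/
noncomputable def gfun (ρ : ∀ ℓ, Measure (Z ℓ))
    (w : ∀ ℓ : ℕ, Node d Z (ℓ + 1) → Node d Z ℓ → ℝ)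
    (hact : ℕ → ℝ → ℝ) (x : Fin d → ℝ) : (ℓ : ℕ) → Node d Z (ℓ + 1) → ℝ
  | 0, z => (d : ℝ)⁻¹ * ∑ j : Fin d, w 0 z j * x j
  | ℓ + 1, z => ∫ ζ, w (ℓ + 1) z ζ * ffun ρ w hact x (ℓ + 1) ζ ∂(ρ ℓ)

/-- Output `f(x)` of the continuous DNN with `L = Lp + 1` hidden layers. -/
noncomputable def fout (Lp K : ℕ) (ρ : ∀ ℓ, Measure (Z ℓ))
    (w : ∀ ℓ : ℕ, Node d Z (ℓ + 1) → Node d Z ℓ → ℝ)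
    (hact : ℕ → ℝ → ℝ) (u : Z Lp → EuclideanSpace ℝ (Fin K)) (x : Fin d → ℝ) :
    EuclideanSpace ℝ (Fin K) :=
  ∫ z, ffun ρ w hact x (Lp + 1) z • u z ∂(ρ Lp)


/-- Density at the node level: `p^{(0)} ≡ 1` on the input layer, and `p^{(ℓ+1)} = p ℓ`
on hidden layer `ℓ+1`. -/
def pNode (d : ℕ) {Z : ℕ → Type} (p : ∀ ℓ, Z ℓ → ℝ) : ∀ ℓ, Node d Z ℓ → ℝ
  | 0 => fun _ => 1
  | ℓ + 1 => p ℓ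

/-- Measures at the node level: the uniform probability measure on `Fin d` at layer `0`,
and `ρ ℓ` on hidden layer `ℓ+1`. -/
noncomputable def nodeMeasure (d : ℕ) {Z : ℕ → Type} [∀ ℓ, MeasurableSpace (Z ℓ)]
    (ρ : ∀ ℓ, Measure (Z ℓ)) : ∀ ℓ, Measure (Node d Z ℓ)
  | 0 => ((d : ℝ≥0∞)⁻¹ • Measure.count : Measure (Fin d))
  | ℓ + 1 => ρ ℓ

/-- Change-of-density formula for Bochner integrals with a nonnegative real density. -/
lemma repop_integral {α : Type} [MeasurableSpace α] (μ : Measure α) (p : α → ℝ)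
    (hp : Measurable p) (hpos : ∀ z, 0 ≤ p z) {E : Type*} [NormedAddCommGroup E]
    [NormedSpace ℝ E] (g : α → E) :
    ∫ a, g a ∂(μ.withDensity fun z => ENNReal.ofReal (p z)) = ∫ a, p a • g a ∂μ := by
  have h : (fun z => ENNReal.ofReal (p z)) = fun z => ((Real.toNNReal (p z) : ℝ≥0) : ℝ≥0∞) :=
    rfl
  rw [h, integral_withDensity_eq_integral_smul (hp.real_toNNReal)]
  refine integral_congr_ae (Filter.Eventually.of_forall fun a => ?_)
  simp [NNReal.smul_def, Real.coe_toNNReal _ (hpos a)]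

/-- **Neural feature repopulation** (Theorem 3, weight-kernel form).  Given base
probability measures `ρ₀^{(ℓ)}` mutually absolutely continuous with `ρ^{(ℓ)}` with
everywhere finite positive densities `p^{(ℓ)} = dρ^{(ℓ)}/dρ₀^{(ℓ)}` (and `p^{(0)} ≡ 1`),
the repopulated network with weights `w̃^{(ℓ)}(z,ζ) = w^{(ℓ)}(z,ζ) p^{(ℓ−1)}(ζ)` and top
weights `ũ = u · p^{(L)}` computes the same layer functions and output, and the
regularizer integrals transform by the change-of-density formula. -/
theorem neural_feature_repopulation
    (Lp d K : ℕ) (hd : 1 ≤ d) (hK : 1 ≤ K)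
    (Z : ℕ → Type) [∀ ℓ, MeasurableSpace (Z ℓ)]
    (ρ ρ₀ : ∀ ℓ, Measure (Z ℓ))
    [∀ ℓ, IsProbabilityMeasure (ρ ℓ)] [∀ ℓ, IsProbabilityMeasure (ρ₀ ℓ)]
    (w : ∀ ℓ : ℕ, Node d Z (ℓ + 1) → Node d Z ℓ → ℝ)
    (hwmeas : ∀ ℓ, Measurable fun q : Node d Z (ℓ + 1) × Node d Z ℓ => w ℓ q.1 q.2)
    (hact : ℕ → ℝ → ℝ) (hhmeas : ∀ ℓ, Measurable (hact ℓ))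
    (u : Z Lp → EuclideanSpace ℝ (Fin K)) (humeas : Measurable u)
    -- fixed versions of the densities `p^{(ℓ)} = dρ^{(ℓ)}/dρ₀^{(ℓ)}`, `0 < p < ∞`
    (p : ∀ ℓ, Z ℓ → ℝ) (hpmeas : ∀ ℓ, Measurable (p ℓ)) (hppos : ∀ ℓ z, 0 < p ℓ z)
    (hdens : ∀ ℓ, ρ ℓ = (ρ₀ ℓ).withDensity fun z => ENNReal.ofReal (p ℓ z))
    -- absolute convergence of the integrals defining the original network
    (hint₁ : ∀ (x : Fin d → ℝ) (t : ℕ) (z : Z (t + 1)),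
      Integrable (fun ζ : Z t => w (t + 1) z ζ * ffun ρ w hact x (t + 1) ζ) (ρ t))
    (hint₂ : ∀ x : Fin d → ℝ,
      Integrable (fun z : Z Lp => ffun ρ w hact x (Lp + 1) z • u z) (ρ Lp))
    -- the repopulated weights
    (wT : ∀ ℓ : ℕ, Node d Z (ℓ + 1) → Node d Z ℓ → ℝ)
    (hwT : ∀ ℓ (z : Node d Z (ℓ + 1)) (ζ : Node d Z ℓ),
      wT ℓ z ζ = w ℓ z ζ * pNode d p ℓ ζ)
    (uT : Z Lp → EuclideanSpace ℝ (Fin K))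
    (huT : ∀ z, uT z = p Lp z • u z) :
    -- (i) equality of layer functions and outputs
    ((∀ (x : Fin d → ℝ) (ℓ : ℕ), ℓ ≤ Lp + 1 → ∀ z : Node d Z ℓ,
        ffun ρ₀ wT hact x ℓ z = ffun ρ w hact x ℓ z) ∧
      ∀ x : Fin d → ℝ, fout Lp K ρ₀ wT hact uT x = fout Lp K ρ w hact u x) ∧
    -- (ii) change-of-density formula for the regularizers
    (∀ (r₁ r₂ : ℝ → ℝ) (ru : EuclideanSpace ℝ (Fin K) → ℝ),
      Measurable r₁ → Measurable r₂ → Measurable ru →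
      (∀ t : ℕ, t ≤ Lp →
        (∀ ζ : Node d Z t, Integrable (fun z : Z t => r₁ (w t z ζ)) (ρ t)) →
        Integrable (fun ζ : Node d Z t => r₂ (∫ z : Z t, r₁ (w t z ζ) ∂(ρ t)))
          (nodeMeasure d ρ t) →
        ∫ ζ : Node d Z t, r₂ (∫ z : Z t, r₁ (w t z ζ) ∂(ρ t)) ∂(nodeMeasure d ρ t) =
          ∫ ζ : Node d Z t,
            r₂ (∫ z : Z t, r₁ (wT t z ζ / pNode d p t ζ) * p t z ∂(ρ₀ t)) *
              pNode d p t ζ ∂(nodeMeasure d ρ₀ t)) ∧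
      (Integrable (fun z : Z Lp => ru (u z)) (ρ Lp) →
        ∫ z : Z Lp, ru (u z) ∂(ρ Lp) =
          ∫ z : Z Lp, ru ((p Lp z)⁻¹ • uT z) * p Lp z ∂(ρ₀ Lp))) := by
  have hpnn : ∀ ℓ z, (0:ℝ) ≤ p ℓ z := fun ℓ z => (hppos ℓ z).le
  -- (i): equality of layer functions
  have hff : ∀ (x : Fin d → ℝ) (ℓ : ℕ) (z : Node d Z ℓ),
      ffun ρ₀ wT hact x ℓ z = ffun ρ w hact x ℓ z := by
    intro x ℓ
    induction ℓ with
    | zero => intro z; rfl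
    | succ n IH =>
      match n, IH with
      | 0, _ =>
        intro z
        simp only [ffun, hwT, pNode, mul_one]
        exact congrArg _ (congrArg _ (Finset.sum_congr rfl fun j _ => by rw [hwT 0 z j]; simp [pNode]))
      | (m+1), IH =>
        intro z
        simp only [ffun]
        congr 1
        have : (∫ ζ, wT (m + 1) z ζ * ffun ρ₀ wT hact x (m + 1) ζ ∂(ρ₀ m)) =
            ∫ ζ, p m ζ • (w (m + 1) z ζ * ffun ρ w hact x (m + 1) ζ) ∂(ρ₀ m) := by
          refine integral_congr_ae (Filter.Eventually.of_forall fun ζ => ?_)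
          dsimp only
          rw [hwT (m + 1) z ζ, IH ζ]
          show w (m+1) z ζ * pNode d p (m+1) ζ * _ = _
          simp only [pNode, smul_eq_mul]; ring
        rw [this, ← repop_integral (ρ₀ m) (p m) (hpmeas m) (hpnn m), ← hdens m]
  refine ⟨⟨fun x ℓ _ z => hff x ℓ z, fun x => ?_⟩, ?_⟩
  · unfold fout
    rw [hdens Lp, repop_integral (ρ₀ Lp) (p Lp) (hpmeas Lp) (hpnn Lp)]
    refine integral_congr_ae (Filter.Eventually.of_forall fun z => ?_)
    dsimp only
    rw [hff x (Lp + 1) z, huT z]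
    rw [smul_comm, smul_smul]
  · intro r₁ r₂ ru _ _ _
    constructor
    · intro t _ _ _
      -- inner integral identity
      have hinner : ∀ ζ : Node d Z t,
          (∫ zz : Z t, r₁ (w t zz ζ) ∂(ρ t)) =
          ∫ zz : Z t, r₁ (wT t zz ζ / pNode d p t ζ) * p t zz ∂(ρ₀ t) := by
        intro ζ
        have hp0 : pNode d p t ζ ≠ 0 := by
          cases t with
          | zero => exact one_ne_zero
          | succ s => exact (hppos s ζ).ne'
        rw [hdens t, repop_integral (ρ₀ t) (p t) (hpmeas t) (hpnn t)]
        refine integral_congr_ae (Filter.Eventually.of_forall fun zz => ?_)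
        dsimp only
        rw [hwT t zz ζ, mul_div_assoc, div_self hp0, mul_one, smul_eq_mul, mul_comm]
      cases t with
      | zero =>
        show (∫ ζ, _ ∂(nodeMeasure d ρ 0)) = _
        have hmeq : nodeMeasure d ρ 0 = nodeMeasure d ρ₀ 0 := rfl
        rw [hmeq]
        refine integral_congr_ae (Filter.Eventually.of_forall fun ζ => ?_)
        dsimp only
        rw [hinner ζ]
        show _ = _ * pNode d p 0 ζ
        simp [pNode]
      | succ s =>
        show (∫ ζ, _ ∂(ρ s)) = ∫ ζ, _ ∂(ρ₀ s)
        rw [hdens s, repop_integral (ρ₀ s) (p s) (hpmeas s) (hpnn s)]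
        refine integral_congr_ae (Filter.Eventually.of_forall fun ζ => ?_)
        dsimp only
        rw [hinner ζ]
        show p s ζ • _ = _ * pNode d p (s+1) ζ
        simp only [pNode, smul_eq_mul]; ring
    · intro _
      rw [hdens Lp, repop_integral (ρ₀ Lp) (p Lp) (hpmeas Lp) (hpnn Lp)]
      refine integral_congr_ae (Filter.Eventually.of_forall fun z => ?_)
      dsimp only
      rw [huT z, smul_smul, inv_mul_cancel₀ (hppos Lp z).ne', one_smul,
        smul_eq_mul, mul_comm]
end

section
/- Inverse neural feature repopulation (Theorem 4, weight-kernel form): Let ρ₀^(1),…,ρ₀^(L) be fixed probability measures on Z^(1),…,Z^(L), let w̃^(ℓ) : Z^(ℓ) × Z^(ℓ−1) → ℝ be jointly measurable kernels and ũ : Z^(L) → ℝ^K measurable, defining layer functions f̃^(ℓ) and output f̃ as in the continuous DNN. For any probability measures ρ^(ℓ) mutually absolutely continuous with ρ₀^(ℓ), with everywhere-positive finite density versions p^(ℓ) = dρ^(ℓ)/dρ₀^(ℓ) and p^(0) ≡ 1, there exist kernels w^(ℓ) and top weights u — namely w^(ℓ)(z,ζ) = w̃^(ℓ)(z,ζ)/p^(ℓ−1)(ζ)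 and u(z) = ũ(z)/p^(L)(z) — such that the network (ρ^(ℓ), w^(ℓ), u) has the same layer functions and output as (ρ₀^(ℓ), w̃^(ℓ), ũ) at every point and input, and such that ∫ r₂( ∫ r₁( w^(ℓ)(z,ζ) ) dρ^(ℓ)(z) ) dρ^(ℓ−1)(ζ) = ∫ r₂( ∫ r₁( w̃^(ℓ)(z,ζ)/p^(ℓ−1)(ζ) ) p^(ℓ)(z) dρ₀^(ℓ)(z) ) p^(ℓ−1)(ζ) dρ₀^(ℓ−1)(ζ) and ∫ r^(u)( u(z) ) dρ^(L)(z) = ∫ r^(u)( ũ(z)/p^(L)(z) ) p^(L)(z) dρ₀^(L)(z) for all measurable r₁, r₂ : ℝ → ℝ and r^(u) : ℝ^K → ℝ for which these integrals are absolutely convergent. -/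
open MeasureTheory
open scoped ENNReal NNReal BigOperators

variable {d : ℕ} {Z : ℕ → Type} [∀ ℓ, MeasurableSpace (Z ℓ)]

/-- Change-of-density formula for Bochner integrals with an everywhere-positive density. -/
lemma integral_withDensity_ofReal {α E : Type*} [MeasurableSpace α] [NormedAddCommGroup E]
    [NormedSpace ℝ E] (μ : Measure α) (p : α → ℝ) (hp : Measurable p)
    (hpos : ∀ z, 0 < p z) (g : α → E) :
    ∫ z, g z ∂(μ.withDensity fun z => ENNReal.ofReal (p z)) = ∫ z, p z • g z ∂μ := by
  rw [show (fun z => ENNReal.ofReal (p z)) = fun z => ((fun z => (p z).toNNReal) z : ℝ≥0∞) from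
      rfl,
    integral_withDensity_eq_integral_smul hp.real_toNNReal]
  congr 1; ext z
  rw [NNReal.smul_def, Real.coe_toNNReal _ (hpos z).le]

/-- **Inverse neural feature repopulation** (Theorem 4, weight-kernel form).  Given a
network `(ρ₀, w̃, ũ)` and probability measures `ρ^{(ℓ)}` mutually absolutely continuous
with `ρ₀^{(ℓ)}` with everywhere finite positive densities `p^{(ℓ)}` (and `p^{(0)} ≡ 1`),
the kernels `w^{(ℓ)}(z,ζ) = w̃^{(ℓ)}(z,ζ)/p^{(ℓ−1)}(ζ)` and top weights
`u = ũ / p^{(L)}` yield a network `(ρ, w, u)` with the same layer functions and output,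
whose regularizer integrals transform by the change-of-density formula. -/
theorem inverse_neural_feature_repopulation
    (Lp d K : ℕ) (hd : 1 ≤ d) (hK : 1 ≤ K)
    (Z : ℕ → Type) [∀ ℓ, MeasurableSpace (Z ℓ)]
    (ρ₀ ρ : ∀ ℓ, Measure (Z ℓ))
    [∀ ℓ, IsProbabilityMeasure (ρ₀ ℓ)] [∀ ℓ, IsProbabilityMeasure (ρ ℓ)]
    (wT : ∀ ℓ : ℕ, Node d Z (ℓ + 1) → Node d Z ℓ → ℝ)
    (hwTmeas : ∀ ℓ, Measurable fun q : Node d Z (ℓ + 1) × Node d Z ℓ => wT ℓ q.1 q.2)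
    (hact : ℕ → ℝ → ℝ) (hhmeas : ∀ ℓ, Measurable (hact ℓ))
    (uT : Z Lp → EuclideanSpace ℝ (Fin K)) (huTmeas : Measurable uT)
    -- fixed versions of the densities `p^{(ℓ)} = dρ^{(ℓ)}/dρ₀^{(ℓ)}`, `0 < p < ∞`
    (p : ∀ ℓ, Z ℓ → ℝ) (hpmeas : ∀ ℓ, Measurable (p ℓ)) (hppos : ∀ ℓ z, 0 < p ℓ z)
    (hdens : ∀ ℓ, ρ ℓ = (ρ₀ ℓ).withDensity fun z => ENNReal.ofReal (p ℓ z))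
    -- absolute convergence of the integrals defining the network `(ρ₀, w̃, ũ)`
    (hint₁ : ∀ (x : Fin d → ℝ) (t : ℕ) (z : Z (t + 1)),
      Integrable (fun ζ : Z t => wT (t + 1) z ζ * ffun ρ₀ wT hact x (t + 1) ζ) (ρ₀ t))
    (hint₂ : ∀ x : Fin d → ℝ,
      Integrable (fun z : Z Lp => ffun ρ₀ wT hact x (Lp + 1) z • uT z) (ρ₀ Lp)) :
    ∃ (w : ∀ ℓ : ℕ, Node d Z (ℓ + 1) → Node d Z ℓ → ℝ)
      (u : Z Lp → EuclideanSpace ℝ (Fin K)),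
      -- namely `w = w̃ / p` and `u = ũ / p^{(L)}`
      (∀ ℓ (z : Node d Z (ℓ + 1)) (ζ : Node d Z ℓ),
        w ℓ z ζ = wT ℓ z ζ / pNode d p ℓ ζ) ∧
      (∀ z, u z = (p Lp z)⁻¹ • uT z) ∧
      -- same layer functions and output at every point and input
      (∀ (x : Fin d → ℝ) (ℓ : ℕ), ℓ ≤ Lp + 1 → ∀ z : Node d Z ℓ,
        ffun ρ w hact x ℓ z = ffun ρ₀ wT hact x ℓ z) ∧
      (∀ x : Fin d → ℝ, fout Lp K ρ w hact u x = fout Lp K ρ₀ wT hact uT x) ∧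
      -- change-of-density formula for the regularizers
      (∀ (r₁ r₂ : ℝ → ℝ) (ru : EuclideanSpace ℝ (Fin K) → ℝ),
        Measurable r₁ → Measurable r₂ → Measurable ru →
        (∀ t : ℕ, t ≤ Lp →
          (∀ ζ : Node d Z t, Integrable (fun z : Z t => r₁ (w t z ζ)) (ρ t)) →
          Integrable (fun ζ : Node d Z t => r₂ (∫ z : Z t, r₁ (w t z ζ) ∂(ρ t)))
            (nodeMeasure d ρ t) →
          ∫ ζ : Node d Z t, r₂ (∫ z : Z t, r₁ (w t z ζ) ∂(ρ t)) ∂(nodeMeasure d ρ t) =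
            ∫ ζ : Node d Z t,
              r₂ (∫ z : Z t, r₁ (wT t z ζ / pNode d p t ζ) * p t z ∂(ρ₀ t)) *
                pNode d p t ζ ∂(nodeMeasure d ρ₀ t)) ∧
        (Integrable (fun z : Z Lp => ru (u z)) (ρ Lp) →
          ∫ z : Z Lp, ru (u z) ∂(ρ Lp) =
            ∫ z : Z Lp, ru ((p Lp z)⁻¹ • uT z) * p Lp z ∂(ρ₀ Lp))) := by
  set w : ∀ ℓ : ℕ, Node d Z (ℓ + 1) → Node d Z ℓ → ℝ :=
    fun ℓ z ζ => wT ℓ z ζ / pNode d p ℓ ζ with hw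
  set u : Z Lp → EuclideanSpace ℝ (Fin K) := fun z => (p Lp z)⁻¹ • uT z with hu
  have key : ∀ (x : Fin d → ℝ) (ℓ : ℕ) (z : Node d Z ℓ),
      ffun ρ w hact x ℓ z = ffun ρ₀ wT hact x ℓ z := by
    intro x ℓ
    induction ℓ with
    | zero => intro z; rfl
    | succ n ih =>
      match n, ih with
      | 0, _ =>
        intro z
        show hact 1 ((d : ℝ)⁻¹ * ∑ j : Fin d, w 0 z j * x j) = _
        simp [hw, pNode, ffun]
      | m + 1, ih =>
        intro z
        show hact (m + 2) (∫ ζ, w (m + 1) z ζ * ffun ρ w hact x (m + 1) ζ ∂(ρ m)) =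
          hact (m + 2) (∫ ζ, wT (m + 1) z ζ * ffun ρ₀ wT hact x (m + 1) ζ ∂(ρ₀ m))
        congr 1
        rw [hdens m, integral_withDensity_ofReal _ _ (hpmeas m) (hppos m)]
        congr 1; funext ζ
        have hne : p m ζ ≠ 0 := (hppos m ζ).ne'
        rw [ih ζ]
        show p m ζ • (wT (m + 1) z ζ / p m ζ * ffun ρ₀ wT hact x (m + 1) ζ) = _
        rw [smul_eq_mul]
        field_simp
  refine ⟨w, u, fun _ _ _ => rfl, fun _ => rfl, fun x ℓ _ z => key x ℓ z, ?_, ?_⟩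
  · -- output equality
    intro x
    unfold fout
    rw [hdens Lp, integral_withDensity_ofReal _ _ (hpmeas Lp) (hppos Lp)]
    congr 1; funext z
    have hne : p Lp z ≠ 0 := (hppos Lp z).ne'
    rw [key x (Lp + 1) z]
    show p Lp z • (ffun ρ₀ wT hact x (Lp + 1) z • ((p Lp z)⁻¹ • uT z)) = _
    rw [smul_smul, smul_smul, mul_comm (p Lp z), mul_assoc,
      mul_inv_cancel₀ hne, mul_one]
  · -- regularizers
    intro r₁ r₂ ru _ _ _
    constructor
    · intro t _ _ _
      match t with
      | 0 =>
        show ∫ ζ : Fin d, r₂ (∫ z : Z 0, r₁ (w 0 z ζ) ∂(ρ 0))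
              ∂((d : ℝ≥0∞)⁻¹ • Measure.count) = _
        have hinner : ∀ ζ : Fin d,
            ∫ z : Z 0, r₁ (w 0 z ζ) ∂(ρ 0) =
              ∫ z : Z 0, r₁ (wT 0 z ζ / pNode d p 0 ζ) * p 0 z ∂(ρ₀ 0) := by
          intro ζ
          rw [hdens 0, integral_withDensity_ofReal _ _ (hpmeas 0) (hppos 0)]
          congr 1; funext z
          rw [smul_eq_mul, mul_comm]
        show _ = ∫ ζ : Fin d,
            r₂ (∫ z : Z 0, r₁ (wT 0 z ζ / pNode d p 0 ζ) * p 0 z ∂(ρ₀ 0)) *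
              pNode d p 0 ζ ∂((d : ℝ≥0∞)⁻¹ • Measure.count)
        congr 1; funext ζ
        rw [hinner ζ]
        show _ = _ * (1 : ℝ)
        rw [mul_one]
      | s + 1 =>
        show ∫ ζ, r₂ (∫ z, r₁ (w (s + 1) z ζ) ∂(ρ (s + 1))) ∂(ρ s) = _
        rw [hdens s, integral_withDensity_ofReal _ _ (hpmeas s) (hppos s)]
        congr 1; funext ζ
        rw [smul_eq_mul, mul_comm]
        show r₂ (∫ z, r₁ (wT (s + 1) z ζ / p s ζ) ∂(ρ (s + 1))) * p s ζ = _
        rw [hdens (s + 1), integral_withDensity_ofReal _ _ (hpmeas (s + 1)) (hppos (s + 1))]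
        congr 2
        refine congrArg _ ?_
        congr 1; funext z
        rw [smul_eq_mul, mul_comm]
        rfl
    · intro _
      rw [hdens Lp, integral_withDensity_ofReal _ _ (hpmeas Lp) (hppos Lp)]
      congr 1; funext z
      rw [smul_eq_mul, mul_comm]
end

section
/- Convexity of the repopulated objective with ℓ_{1,2} regularization (Theorem 5): Let D be a probability measure on ℝ^d × Y (Y a measurable space) and φ : ℝ^K × Y → ℝ a loss function convex in its first argument. Build the continuous DNN from fixed base probability measures ρ₀^(0),…,ρ₀^(L) and fixed kernels w^(ℓ), so that F(z;x) := f^(L)(z;x) is a fixed jointly measurable function. For measurable ũ : Z^(L) → ℝ^K and measurable densities p^(ℓ) : Z^(ℓ) → (0,∞), ℓ = 1,…,L (with p^(0) ≡ 1), and nonnegative constants λ^(1),…,λ^(L), λ^(u), define Q̆(p^(1),…,p^(L), ũ) = E_{(x,y)~D} φ( ∫ ũ(z) F(z;x) dρ₀^(L)(z), y ) + λ^(u) ∫ ‖ũ(z)‖² / p^(L)(z) dρ₀^(L)(z) + Σ_{ℓ=1}^{L} λ^(ℓ) ∫ ( ∫ |w^(ℓ)(z,ζ)| p^(ℓ)(z)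 dρ₀^(ℓ)(z) )² / p^(ℓ−1)(ζ) dρ₀^(ℓ−1)(ζ), with the regularizer integrals taken in [0,∞] and the loss term assumed well defined. Then Q̆ is jointly convex in (p^(1),…,p^(L), ũ) on the convex set of tuples with each p^(ℓ) everywhere positive: for any two such tuples and θ ∈ [0,1], Q̆ at the convex combination is at most the convex combination of the values. -/
open MeasureTheory
open scoped ENNReal NNReal BigOperators

variable {d : ℕ} {Z : ℕ → Type} [∀ ℓ, MeasurableSpace (Z ℓ)]

/-- Loss term `E_{(x,y)∼D} φ(∫ ũ(z) f^{(L)}(z;x) dρ₀^{(L)}(z), y)` of the repopulated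
objective. -/
noncomputable def lossTerm (Lp d K : ℕ) {Z : ℕ → Type} [∀ ℓ, MeasurableSpace (Z ℓ)]
    (ρ₀ : ∀ ℓ, Measure (Z ℓ))
    (w : ∀ ℓ : ℕ, Node d Z (ℓ + 1) → Node d Z ℓ → ℝ)
    (hact : ℕ → ℝ → ℝ) {Y : Type} [MeasurableSpace Y]
    (D : Measure ((Fin d → ℝ) × Y)) (φ : EuclideanSpace ℝ (Fin K) → Y → ℝ)
    (ut : Z Lp → EuclideanSpace ℝ (Fin K)) : ℝ :=
  ∫ q, φ (∫ z, ffun ρ₀ w hact q.1 (Lp + 1) z • ut z ∂(ρ₀ Lp)) q.2 ∂D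

/-- The `ℓ_{1,2}` repopulated regularizer, expressed through the densities
`q^{(ℓ)} = dρ̃^{(ℓ)}/dρ₀^{(ℓ)}` (with `q^{(0)} ≡ 1`), valued in `[0,∞]`. -/
noncomputable def regTerm12 (Lp d : ℕ) (K : ℕ) {Z : ℕ → Type} [∀ ℓ, MeasurableSpace (Z ℓ)]
    (ρ₀ : ∀ ℓ, Measure (Z ℓ))
    (w : ∀ ℓ : ℕ, Node d Z (ℓ + 1) → Node d Z ℓ → ℝ)
    (lam : ℕ → ℝ) (lamu : ℝ)
    (q : ∀ ℓ, Node d Z ℓ → ℝ) (ut : Z Lp → EuclideanSpace ℝ (Fin K)) : ℝ≥0∞ :=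
  ENNReal.ofReal lamu *
      ∫⁻ z : Z Lp, ENNReal.ofReal (‖ut z‖ ^ 2 / q (Lp + 1) z) ∂(ρ₀ Lp) +
    ∑ t ∈ Finset.range (Lp + 1), ENNReal.ofReal (lam (t + 1)) *
      ∫⁻ ζ : Node d Z t,
        (∫⁻ z : Z t, ENNReal.ofReal (|w t z ζ| * q (t + 1) z) ∂(ρ₀ t)) ^ 2 /
          ENNReal.ofReal (q t ζ) ∂(nodeMeasure d ρ₀ t)


section AuxConvexity

open scoped ENNReal

/-- Quadratic-over-linear convexity inequality in `ℝ`. -/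
lemma quad_real_aux (a b x y σ τ : ℝ) (ha : 0 ≤ a) (hb : 0 ≤ b) (hab : a + b = 1)
    (hx : 0 ≤ x) (hy : 0 ≤ y) (hσ : 0 < σ) (hτ : 0 < τ) :
    (a*x+b*y)^2/(a*σ+b*τ) ≤ a*(x^2/σ) + b*(y^2/τ) := by
  have hden : 0 < a*σ + b*τ := by
    rcases ha.lt_or_eq with h | h
    · have : 0 ≤ b*τ := mul_nonneg hb hτ.le
      nlinarith
    · have hb1 : b = 1 := by linarith
      nlinarith
  rw [div_le_iff₀ hden]
  have e1 : x^2/σ * σ = x^2 := div_mul_cancel₀ _ hσ.ne'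
  have e2 : y^2/τ * τ = y^2 := div_mul_cancel₀ _ hτ.ne'
  have key : 2*x*y ≤ x^2/σ*τ + y^2/τ*σ := by
    rw [← mul_le_mul_iff_left₀ (mul_pos hσ hτ)]
    have h3 : (x^2/σ*τ + y^2/τ*σ) * (σ*τ) = x^2*τ^2 + y^2*σ^2 := by
      field_simp
    rw [h3]
    nlinarith [sq_nonneg (x*τ - y*σ)]
  nlinarith [mul_nonneg (mul_nonneg ha hb) (sub_nonneg.2 key), e1, e2, sq_nonneg a, sq_nonneg b]

/-- Quadratic-over-linear convexity inequality in `ℝ≥0∞`. -/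
lemma quad_ennreal_aux (θ : ℝ) (hθ0 : 0 ≤ θ) (hθ1 : θ ≤ 1) (x y : ℝ≥0∞) (σ τ : ℝ)
    (hσ : 0 < σ) (hτ : 0 < τ) :
    (ENNReal.ofReal θ * x + ENNReal.ofReal (1-θ) * y)^2 / ENNReal.ofReal (θ*σ + (1-θ)*τ) ≤
      ENNReal.ofReal θ * (x^2 / ENNReal.ofReal σ) +
        ENNReal.ofReal (1-θ) * (y^2 / ENNReal.ofReal τ) := by
  have hθ1' : 0 ≤ 1 - θ := by linarith
  rcases eq_or_lt_of_le hθ0 with h0 | h0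
  · rw [← h0]; norm_num
  rcases eq_or_lt_of_le hθ1 with h1 | h1
  · rw [h1]; norm_num
  have haz : ENNReal.ofReal θ ≠ 0 := by simp [ENNReal.ofReal_eq_zero]; linarith
  have hbz : ENNReal.ofReal (1-θ) ≠ 0 := by simp [ENNReal.ofReal_eq_zero]; linarith
  rcases eq_or_ne x ⊤ with rfl | hx
  · have : ENNReal.ofReal θ * (⊤^2 / ENNReal.ofReal σ) = ⊤ := by
      rw [ENNReal.top_pow (by norm_num), ENNReal.top_div_of_ne_top (by simp)]
      exact ENNReal.mul_top haz
    rw [this]; simp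
  rcases eq_or_ne y ⊤ with rfl | hy
  · have : ENNReal.ofReal (1-θ) * (⊤^2 / ENNReal.ofReal τ) = ⊤ := by
      rw [ENNReal.top_pow (by norm_num), ENNReal.top_div_of_ne_top (by simp)]
      exact ENNReal.mul_top hbz
    rw [this]; simp
  lift x to NNReal using hx
  lift y to NNReal using hy
  have hxr : (0:ℝ) ≤ (x:ℝ) := x.coe_nonneg
  have hyr : (0:ℝ) ≤ (y:ℝ) := y.coe_nonneg
  have hden : (0:ℝ) < θ*σ + (1-θ)*τ := by nlinarith
  rw [show ((x:ℝ≥0∞)) = ENNReal.ofReal (x:ℝ) from (@ENNReal.ofReal_coe_nnreal x).symm,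
      show ((y:ℝ≥0∞)) = ENNReal.ofReal (y:ℝ) from (@ENNReal.ofReal_coe_nnreal y).symm,
      ← ENNReal.ofReal_mul hθ0, ← ENNReal.ofReal_mul hθ1',
      ← ENNReal.ofReal_add (by positivity) (by positivity),
      ← ENNReal.ofReal_pow (by positivity),
      ← ENNReal.ofReal_div_of_pos hden,
      ← ENNReal.ofReal_pow hxr, ← ENNReal.ofReal_pow hyr,
      ← ENNReal.ofReal_div_of_pos hσ, ← ENNReal.ofReal_div_of_pos hτ,
      ← ENNReal.ofReal_mul hθ0, ← ENNReal.ofReal_mul hθ1',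
      ← ENNReal.ofReal_add (by positivity) (by positivity)]
  exact ENNReal.ofReal_le_ofReal
    (quad_real_aux θ (1-θ) x y σ τ hθ0 hθ1' (by ring) hxr hyr hσ hτ)

/-- Distributing a nonnegative real scalar over a sum of a real and an `ℝ≥0∞` value
inside `EReal`. -/
lemma ereal_distrib_aux (θ L : ℝ) (R : ℝ≥0∞) (hθ : 0 ≤ θ) :
    ((θ:EReal)) * ((L:EReal) + (R:EReal)) =
      ((θ*L : ℝ) : EReal) + ((ENNReal.ofReal θ * R : ℝ≥0∞) : EReal) := by
  rcases eq_or_ne R ⊤ with rfl | hR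
  · rcases eq_or_lt_of_le hθ with h0 | h0
    · rw [← h0]; simp
    · rw [EReal.coe_ennreal_top, EReal.add_top_of_ne_bot (by simp),
        ENNReal.mul_top (by simp [ENNReal.ofReal_eq_zero]; linarith),
        EReal.mul_top_of_pos (by exact_mod_cast h0), EReal.coe_ennreal_top,
        EReal.add_top_of_ne_bot (EReal.coe_ne_bot _)]
  · lift R to NNReal using hR
    have h1 : ((R : ℝ≥0∞) : EReal) = ((R : ℝ) : EReal) := rfl
    have h2 : ENNReal.ofReal θ * (R:ℝ≥0∞) = ENNReal.ofReal (θ * R) := by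
      rw [ENNReal.ofReal_mul hθ, ENNReal.ofReal_coe_nnreal]
    rw [h1, h2, ← EReal.coe_add, ← EReal.coe_mul, EReal.coe_ennreal_ofReal,
      max_eq_left (by positivity), ← EReal.coe_add]
    norm_num [mul_add]

lemma convex_pos_aux (θ x y : ℝ) (h0 : 0 ≤ θ) (h1 : θ ≤ 1) (hx : 0 < x) (hy : 0 < y) :
    0 < θ*x + (1-θ)*y := by
  rcases eq_or_lt_of_le h0 with h|h
  · rw [← h]; simpa using hy
  · nlinarith [mul_pos h hx, mul_nonneg (by linarith : (0:ℝ) ≤ 1-θ) hy.le]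

lemma lintegral_comb_aux {α : Type*} [MeasurableSpace α] (μ : MeasureTheory.Measure α)
    (a b : ℝ≥0∞) {f g : α → ℝ≥0∞} (hf : Measurable f) (hg : Measurable g) :
    ∫⁻ x, (a * f x + b * g x) ∂μ = a * ∫⁻ x, f x ∂μ + b * ∫⁻ x, g x ∂μ := by
  rw [MeasureTheory.lintegral_add_left (hf.const_mul a),
    MeasureTheory.lintegral_const_mul a hf, MeasureTheory.lintegral_const_mul b hg]

lemma integral_comb_real_aux {α : Type*} [MeasurableSpace α] (μ : MeasureTheory.Measure α)
    (c₁ c₂ : ℝ) {f g : α → ℝ} (hf : MeasureTheory.Integrable f μ)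
    (hg : MeasureTheory.Integrable g μ) :
    ∫ x, (c₁ * f x + c₂ * g x) ∂μ = c₁ * ∫ x, f x ∂μ + c₂ * ∫ x, g x ∂μ := by
  rw [MeasureTheory.integral_add (hf.const_mul c₁) (hg.const_mul c₂),
    MeasureTheory.integral_const_mul, MeasureTheory.integral_const_mul]

lemma integral_comb_smul_aux {α E : Type*} [MeasurableSpace α] [NormedAddCommGroup E]
    [NormedSpace ℝ E] (μ : MeasureTheory.Measure α) (c₁ c₂ : ℝ) {f g : α → E}
    (hf : MeasureTheory.Integrable (fun x => c₁ • f x) μ)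
    (hg : MeasureTheory.Integrable (fun x => c₂ • g x) μ) :
    ∫ x, (c₁ • f x + c₂ • g x) ∂μ = c₁ • ∫ x, f x ∂μ + c₂ • ∫ x, g x ∂μ := by
  rw [MeasureTheory.integral_add hf hg, MeasureTheory.integral_smul,
    MeasureTheory.integral_smul]

end AuxConvexity

/-- **Convexity of the repopulated objective with `ℓ_{1,2}` regularization** (Theorem 5).
With a loss `φ` convex in its first argument, the repopulated objective
`Q̆(p, ũ) = E φ(∫ ũ F dρ₀^{(L)}, y) + λ^{(u)} ∫ ‖ũ‖²/p^{(L)} + Σ_ℓ λ^{(ℓ)}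
∫ (∫ |w^{(ℓ)}| p^{(ℓ)})² / p^{(ℓ−1)}` is jointly convex in the densities and the top
weights (the regularizer is valued in `[0,∞]`, so the inequality is stated in `EReal`). -/
theorem repopulated_objective_convex_l12
    (Lp d K : ℕ) (hd : 1 ≤ d) (hK : 1 ≤ K)
    (Z : ℕ → Type) [∀ ℓ, MeasurableSpace (Z ℓ)]
    (ρ₀ : ∀ ℓ, Measure (Z ℓ)) [∀ ℓ, IsProbabilityMeasure (ρ₀ ℓ)]
    (w : ∀ ℓ : ℕ, Node d Z (ℓ + 1) → Node d Z ℓ → ℝ)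
    (hwmeas : ∀ ℓ, Measurable fun q : Node d Z (ℓ + 1) × Node d Z ℓ => w ℓ q.1 q.2)
    (hact : ℕ → ℝ → ℝ)
    -- `F(z;x) = f^{(L)}(z;x)` is a fixed jointly measurable function
    (hF : Measurable fun pq : Z Lp × (Fin d → ℝ) => ffun ρ₀ w hact pq.2 (Lp + 1) pq.1)
    (Y : Type) [MeasurableSpace Y]
    (D : Measure ((Fin d → ℝ) × Y)) [IsProbabilityMeasure D]
    (φ : EuclideanSpace ℝ (Fin K) → Y → ℝ)
    (hφ : ∀ y, ConvexOn ℝ Set.univ fun v => φ v y)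
    (lam : ℕ → ℝ) (hlam : ∀ ℓ, 0 ≤ lam ℓ) (lamu : ℝ) (hlamu : 0 ≤ lamu)
    -- two points of the convex set of tuples, and a convex combination
    (q₁ q₂ : ∀ ℓ, Node d Z ℓ → ℝ)
    (hq₁0 : ∀ ζ : Node d Z 0, q₁ 0 ζ = 1) (hq₂0 : ∀ ζ : Node d Z 0, q₂ 0 ζ = 1)
    (hq₁m : ∀ ℓ, 1 ≤ ℓ → ℓ ≤ Lp + 1 → Measurable (q₁ ℓ))
    (hq₂m : ∀ ℓ, 1 ≤ ℓ → ℓ ≤ Lp + 1 → Measurable (q₂ ℓ))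
    (hq₁p : ∀ ℓ (z : Node d Z ℓ), 0 < q₁ ℓ z) (hq₂p : ∀ ℓ (z : Node d Z ℓ), 0 < q₂ ℓ z)
    (u₁ u₂ : Z Lp → EuclideanSpace ℝ (Fin K))
    (hu₁m : Measurable u₁) (hu₂m : Measurable u₂)
    -- the loss term is well defined
    (hIi₁ : ∀ x : Fin d → ℝ,
      Integrable (fun z : Z Lp => ffun ρ₀ w hact x (Lp + 1) z • u₁ z) (ρ₀ Lp))
    (hIi₂ : ∀ x : Fin d → ℝ,
      Integrable (fun z : Z Lp => ffun ρ₀ w hact x (Lp + 1) z • u₂ z) (ρ₀ Lp))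
    (hIl₁ : Integrable (fun q : (Fin d → ℝ) × Y =>
      φ (∫ z, ffun ρ₀ w hact q.1 (Lp + 1) z • u₁ z ∂(ρ₀ Lp)) q.2) D)
    (hIl₂ : Integrable (fun q : (Fin d → ℝ) × Y =>
      φ (∫ z, ffun ρ₀ w hact q.1 (Lp + 1) z • u₂ z ∂(ρ₀ Lp)) q.2) D)
    (θ : ℝ) (hθ0 : 0 ≤ θ) (hθ1 : θ ≤ 1)
    -- the convex combination of the two tuples
    (qθ : ∀ ℓ, Node d Z ℓ → ℝ) (uθ : Z Lp → EuclideanSpace ℝ (Fin K))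
    (hqθ : ∀ ℓ (z : Node d Z ℓ), qθ ℓ z = θ * q₁ ℓ z + (1 - θ) * q₂ ℓ z)
    (huθ : ∀ z, uθ z = θ • u₁ z + (1 - θ) • u₂ z)
    (hIlθ : Integrable (fun q : (Fin d → ℝ) × Y =>
      φ (∫ z, ffun ρ₀ w hact q.1 (Lp + 1) z • uθ z ∂(ρ₀ Lp)) q.2) D) :
    ((lossTerm Lp d K ρ₀ w hact D φ uθ : ℝ) : EReal) +
        ((regTerm12 Lp d K ρ₀ w lam lamu qθ uθ : ℝ≥0∞) : EReal) ≤
      ((θ : ℝ) : EReal) *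
          (((lossTerm Lp d K ρ₀ w hact D φ u₁ : ℝ) : EReal) +
            ((regTerm12 Lp d K ρ₀ w lam lamu q₁ u₁ : ℝ≥0∞) : EReal)) +
        (((1 - θ : ℝ)) : EReal) *
          (((lossTerm Lp d K ρ₀ w hact D φ u₂ : ℝ) : EReal) +
            ((regTerm12 Lp d K ρ₀ w lam lamu q₂ u₂ : ℝ≥0∞) : EReal)):= by
  have hθ1' : (0:ℝ) ≤ 1 - θ := by linarith
  set a := ENNReal.ofReal θ with ha
  set b := ENNReal.ofReal (1-θ) with hb
  -- loss term convexity
  have hsplit : ∀ x : Fin d → ℝ, (fun z : Z Lp => ffun ρ₀ w hact x (Lp+1) z • uθ z)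
      = fun z => θ • (ffun ρ₀ w hact x (Lp+1) z • u₁ z)
          + (1-θ) • (ffun ρ₀ w hact x (Lp+1) z • u₂ z) := by
    intro x; funext z
    rw [huθ z]
    rw [smul_add, smul_comm (ffun ρ₀ w hact x (Lp+1) z) θ,
      smul_comm (ffun ρ₀ w hact x (Lp+1) z) (1-θ)]
  have hintθ : ∀ x : Fin d → ℝ, (∫ z, ffun ρ₀ w hact x (Lp+1) z • uθ z ∂(ρ₀ Lp))
      = θ • (∫ z, ffun ρ₀ w hact x (Lp+1) z • u₁ z ∂(ρ₀ Lp))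
        + (1-θ) • (∫ z, ffun ρ₀ w hact x (Lp+1) z • u₂ z ∂(ρ₀ Lp)) := by
    intro x
    have h1 : Integrable (fun z : Z Lp => θ • (ffun ρ₀ w hact x (Lp+1) z • u₁ z)) (ρ₀ Lp) :=
      (hIi₁ x).smul θ
    have h2 : Integrable (fun z : Z Lp => (1-θ) • (ffun ρ₀ w hact x (Lp+1) z • u₂ z)) (ρ₀ Lp) :=
      (hIi₂ x).smul (1-θ)
    rw [hsplit x]
    exact integral_comb_smul_aux (ρ₀ Lp) θ (1-θ) h1 h2
  have hloss : lossTerm Lp d K ρ₀ w hact D φ uθ ≤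
      θ * lossTerm Lp d K ρ₀ w hact D φ u₁ + (1-θ) * lossTerm Lp d K ρ₀ w hact D φ u₂ := by
    have hpt : ∀ p : (Fin d → ℝ) × Y,
        φ (∫ z, ffun ρ₀ w hact p.1 (Lp+1) z • uθ z ∂(ρ₀ Lp)) p.2 ≤
          θ * φ (∫ z, ffun ρ₀ w hact p.1 (Lp+1) z • u₁ z ∂(ρ₀ Lp)) p.2
            + (1-θ) * φ (∫ z, ffun ρ₀ w hact p.1 (Lp+1) z • u₂ z ∂(ρ₀ Lp)) p.2 := by
      intro p
      rw [hintθ p.1]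
      have := (hφ p.2).2 (Set.mem_univ (∫ z, ffun ρ₀ w hact p.1 (Lp+1) z • u₁ z ∂(ρ₀ Lp)))
        (Set.mem_univ (∫ z, ffun ρ₀ w hact p.1 (Lp+1) z • u₂ z ∂(ρ₀ Lp))) hθ0 hθ1'
        (by ring)
      simpa [smul_eq_mul] using this
    simp only [lossTerm]
    calc (∫ p, φ (∫ z, ffun ρ₀ w hact p.1 (Lp+1) z • uθ z ∂(ρ₀ Lp)) p.2 ∂D)
        ≤ ∫ p, (θ * φ (∫ z, ffun ρ₀ w hact p.1 (Lp+1) z • u₁ z ∂(ρ₀ Lp)) p.2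
            + (1-θ) * φ (∫ z, ffun ρ₀ w hact p.1 (Lp+1) z • u₂ z ∂(ρ₀ Lp)) p.2) ∂D :=
          integral_mono hIlθ ((hIl₁.const_mul θ).add (hIl₂.const_mul (1-θ))) hpt
      _ = θ * (∫ p, φ (∫ z, ffun ρ₀ w hact p.1 (Lp+1) z • u₁ z ∂(ρ₀ Lp)) p.2 ∂D)
            + (1-θ) * ∫ p, φ (∫ z, ffun ρ₀ w hact p.1 (Lp+1) z • u₂ z ∂(ρ₀ Lp)) p.2 ∂D := by
          exact integral_comb_real_aux D θ (1-θ) hIl₁ hIl₂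
  -- regularizer convexity
  have hreg : regTerm12 Lp d K ρ₀ w lam lamu qθ uθ ≤
      a * regTerm12 Lp d K ρ₀ w lam lamu q₁ u₁ + b * regTerm12 Lp d K ρ₀ w lam lamu q₂ u₂ := by
    simp only [regTerm12]
    have m1 : Measurable fun z : Z Lp => ENNReal.ofReal (‖u₁ z‖^2 / q₁ (Lp+1) z) :=
      ((hu₁m.norm.pow_const 2).div (hq₁m (Lp+1) (by omega) le_rfl)).ennreal_ofReal
    have m2 : Measurable fun z : Z Lp => ENNReal.ofReal (‖u₂ z‖^2 / q₂ (Lp+1) z) :=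
      ((hu₂m.norm.pow_const 2).div (hq₂m (Lp+1) (by omega) le_rfl)).ennreal_ofReal
    have hu : (∫⁻ z : Z Lp, ENNReal.ofReal (‖uθ z‖^2 / qθ (Lp+1) z) ∂(ρ₀ Lp)) ≤
        a * (∫⁻ z : Z Lp, ENNReal.ofReal (‖u₁ z‖^2 / q₁ (Lp+1) z) ∂(ρ₀ Lp)) +
        b * ∫⁻ z : Z Lp, ENNReal.ofReal (‖u₂ z‖^2 / q₂ (Lp+1) z) ∂(ρ₀ Lp) := by
      have hptu : ∀ z : Z Lp, ENNReal.ofReal (‖uθ z‖^2 / qθ (Lp+1) z) ≤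
          a * ENNReal.ofReal (‖u₁ z‖^2 / q₁ (Lp+1) z)
            + b * ENNReal.ofReal (‖u₂ z‖^2 / q₂ (Lp+1) z) := by
        intro z
        have hnorm : ‖uθ z‖ ≤ θ * ‖u₁ z‖ + (1-θ) * ‖u₂ z‖ := by
          rw [huθ z]
          refine (norm_add_le _ _).trans ?_
          rw [norm_smul, norm_smul, Real.norm_eq_abs, Real.norm_eq_abs,
            abs_of_nonneg hθ0, abs_of_nonneg hθ1']
        have hqpos : (0:ℝ) < θ * q₁ (Lp+1) z + (1-θ) * q₂ (Lp+1) z := by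
          exact convex_pos_aux θ _ _ hθ0 hθ1 (hq₁p (Lp+1) z) (hq₂p (Lp+1) z)
        have h1 : ‖uθ z‖^2 / qθ (Lp+1) z ≤
            (θ * ‖u₁ z‖ + (1-θ) * ‖u₂ z‖)^2 / (θ * q₁ (Lp+1) z + (1-θ) * q₂ (Lp+1) z) := by
          rw [hqθ (Lp+1) z]
          gcongr
        have h2 := quad_real_aux θ (1-θ) ‖u₁ z‖ ‖u₂ z‖ (q₁ (Lp+1) z) (q₂ (Lp+1) z)
          hθ0 hθ1' (by ring) (norm_nonneg _) (norm_nonneg _) (hq₁p _ _) (hq₂p _ _)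
        calc ENNReal.ofReal (‖uθ z‖^2 / qθ (Lp+1) z)
            ≤ ENNReal.ofReal (θ * (‖u₁ z‖^2 / q₁ (Lp+1) z)
                + (1-θ) * (‖u₂ z‖^2 / q₂ (Lp+1) z)) :=
              ENNReal.ofReal_le_ofReal (h1.trans h2)
          _ = a * ENNReal.ofReal (‖u₁ z‖^2 / q₁ (Lp+1) z)
                + b * ENNReal.ofReal (‖u₂ z‖^2 / q₂ (Lp+1) z) := by
              rw [ENNReal.ofReal_add
                  (mul_nonneg hθ0 (div_nonneg (by positivity) (hq₁p (Lp+1) z).le))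
                  (mul_nonneg hθ1' (div_nonneg (by positivity) (hq₂p (Lp+1) z).le)),
                ENNReal.ofReal_mul hθ0, ENNReal.ofReal_mul hθ1']
      calc (∫⁻ z : Z Lp, ENNReal.ofReal (‖uθ z‖^2 / qθ (Lp+1) z) ∂(ρ₀ Lp))
          ≤ ∫⁻ z : Z Lp, (a * ENNReal.ofReal (‖u₁ z‖^2 / q₁ (Lp+1) z)
              + b * ENNReal.ofReal (‖u₂ z‖^2 / q₂ (Lp+1) z)) ∂(ρ₀ Lp) :=
            lintegral_mono hptu
        _ = _ := lintegral_comb_aux (ρ₀ Lp) a b m1 m2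
    have hsum : ∀ t ∈ Finset.range (Lp+1),
        ENNReal.ofReal (lam (t+1)) *
          (∫⁻ ζ : Node d Z t,
            (∫⁻ z : Z t, ENNReal.ofReal (|w t z ζ| * qθ (t+1) z) ∂(ρ₀ t)) ^ 2 /
              ENNReal.ofReal (qθ t ζ) ∂(nodeMeasure d ρ₀ t)) ≤
        a * (ENNReal.ofReal (lam (t+1)) *
          ∫⁻ ζ : Node d Z t,
            (∫⁻ z : Z t, ENNReal.ofReal (|w t z ζ| * q₁ (t+1) z) ∂(ρ₀ t)) ^ 2 /
              ENNReal.ofReal (q₁ t ζ) ∂(nodeMeasure d ρ₀ t)) +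
        b * (ENNReal.ofReal (lam (t+1)) *
          ∫⁻ ζ : Node d Z t,
            (∫⁻ z : Z t, ENNReal.ofReal (|w t z ζ| * q₂ (t+1) z) ∂(ρ₀ t)) ^ 2 /
              ENNReal.ofReal (q₂ t ζ) ∂(nodeMeasure d ρ₀ t)) := by
      intro t ht
      have htLp : t ≤ Lp := Finset.mem_range_succ_iff.mp ht
      have hq1t1 : Measurable (q₁ (t+1)) := hq₁m (t+1) (by omega) (by omega)
      have hq2t1 : Measurable (q₂ (t+1)) := hq₂m (t+1) (by omega) (by omega)
      have hwswap : Measurable fun p : Node d Z t × Z t => w t p.2 p.1 :=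
        (hwmeas t).comp measurable_swap
      have hjm1 : Measurable fun p : Node d Z t × Z t =>
          ENNReal.ofReal (|w t p.2 p.1| * q₁ (t+1) p.2) :=
        ((hwswap.abs).mul (hq1t1.comp measurable_snd)).ennreal_ofReal
      have hjm2 : Measurable fun p : Node d Z t × Z t =>
          ENNReal.ofReal (|w t p.2 p.1| * q₂ (t+1) p.2) :=
        ((hwswap.abs).mul (hq2t1.comp measurable_snd)).ennreal_ofReal
      have hI1m : Measurable fun ζ : Node d Z t =>
          ∫⁻ z : Z t, ENNReal.ofReal (|w t z ζ| * q₁ (t+1) z) ∂(ρ₀ t) :=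
        hjm1.lintegral_prod_right'
      have hI2m : Measurable fun ζ : Node d Z t =>
          ∫⁻ z : Z t, ENNReal.ofReal (|w t z ζ| * q₂ (t+1) z) ∂(ρ₀ t) :=
        hjm2.lintegral_prod_right'
      have hq1t : Measurable (q₁ t) := by
        cases t with
        | zero =>
          have : q₁ 0 = fun _ => (1:ℝ) := funext hq₁0
          rw [this]; exact measurable_const
        | succ t' => exact hq₁m (t'+1) (by omega) (by omega)
      have hq2t : Measurable (q₂ t) := by
        cases t with
        | zero =>
          have : q₂ 0 = fun _ => (1:ℝ) := funext hq₂0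
          rw [this]; exact measurable_const
        | succ t' => exact hq₂m (t'+1) (by omega) (by omega)
      have hf1m : Measurable fun ζ : Node d Z t =>
          (∫⁻ z : Z t, ENNReal.ofReal (|w t z ζ| * q₁ (t+1) z) ∂(ρ₀ t)) ^ 2 /
            ENNReal.ofReal (q₁ t ζ) :=
        (hI1m.pow_const 2).div hq1t.ennreal_ofReal
      have hf2m : Measurable fun ζ : Node d Z t =>
          (∫⁻ z : Z t, ENNReal.ofReal (|w t z ζ| * q₂ (t+1) z) ∂(ρ₀ t)) ^ 2 /
            ENNReal.ofReal (q₂ t ζ) :=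
        (hI2m.pow_const 2).div hq2t.ennreal_ofReal
      have hinnerθ : ∀ ζ : Node d Z t,
          (∫⁻ z : Z t, ENNReal.ofReal (|w t z ζ| * qθ (t+1) z) ∂(ρ₀ t)) =
            a * (∫⁻ z : Z t, ENNReal.ofReal (|w t z ζ| * q₁ (t+1) z) ∂(ρ₀ t)) +
            b * ∫⁻ z : Z t, ENNReal.ofReal (|w t z ζ| * q₂ (t+1) z) ∂(ρ₀ t) := by
        intro ζ
        have meas1z : Measurable fun z : Z t => ENNReal.ofReal (|w t z ζ| * q₁ (t+1) z) := by
          have hwz : Measurable fun z : Z t => w t z ζ :=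
            (hwmeas t).comp (measurable_id.prodMk measurable_const)
          exact ((hwz.abs).mul hq1t1).ennreal_ofReal
        have meas2z : Measurable fun z : Z t => ENNReal.ofReal (|w t z ζ| * q₂ (t+1) z) := by
          have hwz : Measurable fun z : Z t => w t z ζ :=
            (hwmeas t).comp (measurable_id.prodMk measurable_const)
          exact ((hwz.abs).mul hq2t1).ennreal_ofReal
        calc (∫⁻ z : Z t, ENNReal.ofReal (|w t z ζ| * qθ (t+1) z) ∂(ρ₀ t))
            = ∫⁻ z : Z t, (a * ENNReal.ofReal (|w t z ζ| * q₁ (t+1) z)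
                + b * ENNReal.ofReal (|w t z ζ| * q₂ (t+1) z)) ∂(ρ₀ t) := by
              congr 1
              funext z
              rw [hqθ (t+1) z,
                show |w t z ζ| * (θ * q₁ (t+1) z + (1-θ) * q₂ (t+1) z)
                  = θ * (|w t z ζ| * q₁ (t+1) z) + (1-θ) * (|w t z ζ| * q₂ (t+1) z) from
                  by ring,
                ENNReal.ofReal_add
                  (mul_nonneg hθ0 (mul_nonneg (abs_nonneg _) (hq₁p (t+1) z).le))
                  (mul_nonneg hθ1' (mul_nonneg (abs_nonneg _) (hq₂p (t+1) z).le)),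
                ENNReal.ofReal_mul hθ0, ENNReal.ofReal_mul hθ1']
          _ = _ := lintegral_comb_aux (ρ₀ t) a b meas1z meas2z
      have hpt : ∀ ζ : Node d Z t,
          (∫⁻ z : Z t, ENNReal.ofReal (|w t z ζ| * qθ (t+1) z) ∂(ρ₀ t)) ^ 2 /
              ENNReal.ofReal (qθ t ζ) ≤
            a * ((∫⁻ z : Z t, ENNReal.ofReal (|w t z ζ| * q₁ (t+1) z) ∂(ρ₀ t)) ^ 2 /
              ENNReal.ofReal (q₁ t ζ)) +
            b * ((∫⁻ z : Z t, ENNReal.ofReal (|w t z ζ| * q₂ (t+1) z) ∂(ρ₀ t)) ^ 2 /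
              ENNReal.ofReal (q₂ t ζ)) := by
        intro ζ
        rw [hinnerθ ζ, hqθ t ζ]
        exact quad_ennreal_aux θ hθ0 hθ1 _ _ _ _ (hq₁p t ζ) (hq₂p t ζ)
      calc ENNReal.ofReal (lam (t+1)) *
            (∫⁻ ζ : Node d Z t,
              (∫⁻ z : Z t, ENNReal.ofReal (|w t z ζ| * qθ (t+1) z) ∂(ρ₀ t)) ^ 2 /
                ENNReal.ofReal (qθ t ζ) ∂(nodeMeasure d ρ₀ t))
          ≤ ENNReal.ofReal (lam (t+1)) *
            ∫⁻ ζ : Node d Z t,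
              (a * ((∫⁻ z : Z t, ENNReal.ofReal (|w t z ζ| * q₁ (t+1) z) ∂(ρ₀ t)) ^ 2 /
                  ENNReal.ofReal (q₁ t ζ)) +
               b * ((∫⁻ z : Z t, ENNReal.ofReal (|w t z ζ| * q₂ (t+1) z) ∂(ρ₀ t)) ^ 2 /
                  ENNReal.ofReal (q₂ t ζ))) ∂(nodeMeasure d ρ₀ t) :=
            mul_le_mul_right (lintegral_mono hpt) _
        _ = ENNReal.ofReal (lam (t+1)) *
              (a * (∫⁻ ζ : Node d Z t,
                (∫⁻ z : Z t, ENNReal.ofReal (|w t z ζ| * q₁ (t+1) z) ∂(ρ₀ t)) ^ 2 /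
                  ENNReal.ofReal (q₁ t ζ) ∂(nodeMeasure d ρ₀ t)) +
               b * ∫⁻ ζ : Node d Z t,
                (∫⁻ z : Z t, ENNReal.ofReal (|w t z ζ| * q₂ (t+1) z) ∂(ρ₀ t)) ^ 2 /
                  ENNReal.ofReal (q₂ t ζ) ∂(nodeMeasure d ρ₀ t)) :=
            congrArg _ (lintegral_comb_aux (nodeMeasure d ρ₀ t) a b hf1m hf2m)
        _ = _ := by ring
    calc ENNReal.ofReal lamu * (∫⁻ z : Z Lp, ENNReal.ofReal (‖uθ z‖^2 / qθ (Lp+1) z) ∂(ρ₀ Lp))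
          + ∑ t ∈ Finset.range (Lp+1), ENNReal.ofReal (lam (t+1)) *
            ∫⁻ ζ : Node d Z t,
              (∫⁻ z : Z t, ENNReal.ofReal (|w t z ζ| * qθ (t+1) z) ∂(ρ₀ t)) ^ 2 /
                ENNReal.ofReal (qθ t ζ) ∂(nodeMeasure d ρ₀ t)
        ≤ ENNReal.ofReal lamu *
            (a * (∫⁻ z : Z Lp, ENNReal.ofReal (‖u₁ z‖^2 / q₁ (Lp+1) z) ∂(ρ₀ Lp)) +
             b * ∫⁻ z : Z Lp, ENNReal.ofReal (‖u₂ z‖^2 / q₂ (Lp+1) z) ∂(ρ₀ Lp))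
          + ∑ t ∈ Finset.range (Lp+1),
            (a * (ENNReal.ofReal (lam (t+1)) *
              ∫⁻ ζ : Node d Z t,
                (∫⁻ z : Z t, ENNReal.ofReal (|w t z ζ| * q₁ (t+1) z) ∂(ρ₀ t)) ^ 2 /
                  ENNReal.ofReal (q₁ t ζ) ∂(nodeMeasure d ρ₀ t)) +
             b * (ENNReal.ofReal (lam (t+1)) *
              ∫⁻ ζ : Node d Z t,
                (∫⁻ z : Z t, ENNReal.ofReal (|w t z ζ| * q₂ (t+1) z) ∂(ρ₀ t)) ^ 2 /
                  ENNReal.ofReal (q₂ t ζ) ∂(nodeMeasure d ρ₀ t))) :=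
          add_le_add (mul_le_mul_right hu _) (Finset.sum_le_sum hsum)
      _ = _ := by
          rw [Finset.sum_add_distrib, ← Finset.mul_sum, ← Finset.mul_sum]
          ring
  -- assemble in EReal
  rw [ereal_distrib_aux θ _ _ hθ0, ereal_distrib_aux (1-θ) _ _ hθ1']
  have hrhs :
      (((θ * lossTerm Lp d K ρ₀ w hact D φ u₁ : ℝ) : EReal)
          + ((a * regTerm12 Lp d K ρ₀ w lam lamu q₁ u₁ : ℝ≥0∞) : EReal))
        + (((( 1-θ) * lossTerm Lp d K ρ₀ w hact D φ u₂ : ℝ) : EReal)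
          + ((b * regTerm12 Lp d K ρ₀ w lam lamu q₂ u₂ : ℝ≥0∞) : EReal))
      = (((θ * lossTerm Lp d K ρ₀ w hact D φ u₁
            + (1-θ) * lossTerm Lp d K ρ₀ w hact D φ u₂ : ℝ)) : EReal)
        + (((a * regTerm12 Lp d K ρ₀ w lam lamu q₁ u₁
            + b * regTerm12 Lp d K ρ₀ w lam lamu q₂ u₂ : ℝ≥0∞)) : EReal) := by
    rw [EReal.coe_add, EReal.coe_ennreal_add]
    abel
  rw [hrhs]
  exact add_le_add (EReal.coe_le_coe_iff.2 hloss)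
    (EReal.coe_ennreal_le_coe_ennreal_iff.2 hreg)
end

section
/- Joint convexity of x^a/y^b (Lemma 'property of convex', convexity part): Let a, b be real numbers with a − 1 ≥ b ≥ 0. Then the function f(x, y) = x^a / y^b is convex on the set [0, ∞) × (0, ∞) ⊆ ℝ²: for all (x₁,y₁), (x₂,y₂) in this set and θ ∈ [0,1], f(θx₁ + (1−θ)x₂, θy₁ + (1−θ)y₂) ≤ θ f(x₁,y₁) + (1−θ) f(x₂,y₂). -/
open Real

private lemma holder_two {p q : ℝ} (hpq : Real.HolderConjugate p q)
    {f₁ f₂ g₁ g₂ : ℝ} (hf₁ : 0 ≤ f₁) (hf₂ : 0 ≤ f₂) (hg₁ : 0 ≤ g₁) (hg₂ : 0 ≤ g₂) :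
    f₁ * g₁ + f₂ * g₂ ≤ (f₁ ^ p + f₂ ^ p) ^ (1 / p) * (g₁ ^ q + g₂ ^ q) ^ (1 / q) := by
  have h := Real.inner_le_Lp_mul_Lq (Finset.univ : Finset (Fin 2)) ![f₁, f₂] ![g₁, g₂] hpq
  simpa [Fin.sum_univ_two, abs_of_nonneg hf₁, abs_of_nonneg hf₂, abs_of_nonneg hg₁,
    abs_of_nonneg hg₂] using h

private lemma rpow_mean_two {c θ y₁ y₂ : ℝ} (hc : 0 < c) (hc1 : c ≤ 1) (hθ : 0 ≤ θ)
    (hθ1 : θ ≤ 1) (h1 : 0 ≤ y₁) (h2 : 0 ≤ y₂) :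
    θ * y₁ ^ c + (1 - θ) * y₂ ^ c ≤ (θ * y₁ + (1 - θ) * y₂) ^ c := by
  have hp : (1:ℝ) ≤ 1 / c := by
    rw [le_div_iff₀ hc]; linarith
  have h := Real.arith_mean_le_rpow_mean (Finset.univ : Finset (Fin 2)) ![θ, 1 - θ]
    ![y₁ ^ c, y₂ ^ c] (by intro i _; fin_cases i <;> simp <;> linarith)
    (by simp) (by intro i _; fin_cases i <;> simp <;> positivity) hp
  have e1 : (y₁ ^ c) ^ (1/c) = y₁ := by
    rw [← Real.rpow_mul h1, mul_one_div, div_self hc.ne', Real.rpow_one]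
  have e2 : (y₂ ^ c) ^ (1/c) = y₂ := by
    rw [← Real.rpow_mul h2, mul_one_div, div_self hc.ne', Real.rpow_one]
  simp only [Fin.sum_univ_two, Matrix.cons_val_zero, Matrix.cons_val_one, Matrix.head_cons,
    e1, e2, one_div_one_div] at h
  exact h

/-- **Joint convexity of `x^a / y^b`** (Lemma `property of convex`, convexity part).
For real `a, b` with `a − 1 ≥ b ≥ 0`, the function `(x, y) ↦ x^a / y^b` is convex on
`[0, ∞) × (0, ∞)`. -/
theorem rpow_div_rpow_convex (a b : ℝ) (hab : b ≤ a - 1) (hb : 0 ≤ b) :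
    ∀ x₁ y₁ x₂ y₂ θ : ℝ, 0 ≤ x₁ → 0 < y₁ → 0 ≤ x₂ → 0 < y₂ → 0 ≤ θ → θ ≤ 1 →
      (θ * x₁ + (1 - θ) * x₂) ^ a / (θ * y₁ + (1 - θ) * y₂) ^ b ≤
        θ * (x₁ ^ a / y₁ ^ b) + (1 - θ) * (x₂ ^ a / y₂ ^ b) := by
  intro x₁ y₁ x₂ y₂ θ hx₁ hy₁ hx₂ hy₂ hθ hθ1
  have hθ' : 0 ≤ 1 - θ := by linarith
  have hT : 0 < θ * y₁ + (1 - θ) * y₂ := by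
    rcases eq_or_lt_of_le hθ with h | h
    · simpa [← h] using hy₂
    · nlinarith [mul_pos h hy₁, mul_nonneg hθ' hy₂.le]
  rcases eq_or_lt_of_le (by linarith : (1:ℝ) ≤ a) with ha1 | ha1
  · -- a = 1, so b = 0
    have hb0 : b = 0 := le_antisymm (by linarith) hb
    simp [← ha1, hb0]
  -- a > 1
  have ha0 : 0 < a := by linarith
  have ha1' : 0 < a - 1 := by linarith
  set T := θ * y₁ + (1 - θ) * y₂ with hTdef
  set S := θ * x₁ + (1 - θ) * x₂ with hSdef
  have hS : 0 ≤ S := by positivity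
  set u₁ := x₁ ^ a / y₁ ^ b with hu₁def
  set u₂ := x₂ ^ a / y₂ ^ b with hu₂def
  have hu₁ : 0 ≤ u₁ := by positivity
  have hu₂ : 0 ≤ u₂ := by positivity
  set c := b / (a - 1) with hcdef
  have hc0 : 0 ≤ c := by positivity
  have hc1 : c ≤ 1 := by rw [hcdef, div_le_one ha1']; linarith
  have hpq : Real.HolderConjugate a (a / (a - 1)) := Real.HolderConjugate.conjExponent ha1
  set q := a / (a - 1) with hqdef
  have hq0 : 0 < q := hpq.symm.pos
  have hsum : 1 / a + 1 / q = 1 := by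
    rw [one_div, one_div]; exact hpq.inv_add_inv_eq_one
  -- key identity
  have key : ∀ x y : ℝ, 0 ≤ x → 0 < y →
      ((x ^ a / y ^ b) ^ (1 / a)) * ((y ^ c) ^ (1 / q)) = x := by
    intro x y hx hy
    have h1 : (x ^ a / y ^ b) ^ (1 / a) = x / y ^ (b / a) := by
      rw [Real.div_rpow (by positivity) (by positivity), ← Real.rpow_mul hx,
        ← Real.rpow_mul hy.le, mul_one_div, div_self ha0.ne', Real.rpow_one, mul_one_div]
    have h2 : (y ^ c) ^ (1 / q) = y ^ (b / a) := by
      rw [← Real.rpow_mul hy.le]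
      congr 1
      rw [hcdef, hqdef]
      field_simp
    rw [h1, h2, div_mul_cancel₀]
    positivity
  set U := θ * u₁ + (1 - θ) * u₂ with hUdef
  set V := θ * y₁ ^ c + (1 - θ) * y₂ ^ c with hVdef
  have hU : 0 ≤ U := by positivity
  have hV : 0 ≤ V := by positivity
  -- Hölder step
  have holder : S ≤ U ^ (1 / a) * V ^ (1 / q) := by
    have h := holder_two hpq (f₁ := (θ * u₁) ^ (1 / a)) (f₂ := ((1 - θ) * u₂) ^ (1 / a))
      (g₁ := (θ * y₁ ^ c) ^ (1 / q)) (g₂ := ((1 - θ) * y₂ ^ c) ^ (1 / q))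
      (by positivity) (by positivity) (by positivity) (by positivity)
    have fg₁ : (θ * u₁) ^ (1 / a) * (θ * y₁ ^ c) ^ (1 / q) = θ * x₁ := by
      rw [Real.mul_rpow hθ hu₁, Real.mul_rpow hθ (by positivity)]
      have e : θ ^ (1/a) * (u₁ ^ (1/a)) * (θ ^ (1/q) * (y₁ ^ c) ^ (1/q))
          = (θ ^ (1/a) * θ ^ (1/q)) * ((u₁ ^ (1/a)) * ((y₁ ^ c) ^ (1/q))) := by ring
      rw [e, ← Real.rpow_add' hθ (by rw [hsum]; norm_num), hsum, Real.rpow_one, hu₁def,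
        key x₁ y₁ hx₁ hy₁]
    have fg₂ : ((1 - θ) * u₂) ^ (1 / a) * ((1 - θ) * y₂ ^ c) ^ (1 / q) = (1 - θ) * x₂ := by
      rw [Real.mul_rpow hθ' hu₂, Real.mul_rpow hθ' (by positivity)]
      have e : (1-θ) ^ (1/a) * (u₂ ^ (1/a)) * ((1-θ) ^ (1/q) * (y₂ ^ c) ^ (1/q))
          = ((1-θ) ^ (1/a) * (1-θ) ^ (1/q)) * ((u₂ ^ (1/a)) * ((y₂ ^ c) ^ (1/q))) := by ring
      rw [e, ← Real.rpow_add' hθ' (by rw [hsum]; norm_num), hsum, Real.rpow_one, hu₂def,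
        key x₂ y₂ hx₂ hy₂]
    have pa₁ : ((θ * u₁) ^ (1 / a)) ^ a = θ * u₁ := by
      rw [← Real.rpow_mul (by positivity), one_div_mul_cancel ha0.ne', Real.rpow_one]
    have pa₂ : (((1 - θ) * u₂) ^ (1 / a)) ^ a = (1 - θ) * u₂ := by
      rw [← Real.rpow_mul (by positivity), one_div_mul_cancel ha0.ne', Real.rpow_one]
    have qb₁ : ((θ * y₁ ^ c) ^ (1 / q)) ^ q = θ * y₁ ^ c := by
      rw [← Real.rpow_mul (by positivity), one_div_mul_cancel hq0.ne', Real.rpow_one]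
    have qb₂ : (((1 - θ) * y₂ ^ c) ^ (1 / q)) ^ q = (1 - θ) * y₂ ^ c := by
      rw [← Real.rpow_mul (by positivity), one_div_mul_cancel hq0.ne', Real.rpow_one]
    rw [fg₁, fg₂, pa₁, pa₂, qb₁, qb₂] at h
    exact h
  -- power mean step
  have pm : V ≤ T ^ c := by
    rcases eq_or_lt_of_le hc0 with h0 | h0
    · rw [hVdef, ← h0]
      simp
    · exact rpow_mean_two h0 hc1 hθ hθ1 hy₁.le hy₂.le
  have step2 : S ≤ U ^ (1 / a) * T ^ (b / a) := by
    have : V ^ (1 / q) ≤ (T ^ c) ^ (1 / q) :=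
      Real.rpow_le_rpow hV pm (by positivity)
    have e : (T ^ c) ^ (1 / q) = T ^ (b / a) := by
      rw [← Real.rpow_mul hT.le]
      congr 1
      rw [hcdef, hqdef]
      field_simp
    calc S ≤ U ^ (1 / a) * V ^ (1 / q) := holder
    _ ≤ U ^ (1 / a) * (T ^ c) ^ (1 / q) := by
        exact mul_le_mul_of_nonneg_left this (by positivity)
    _ = U ^ (1 / a) * T ^ (b / a) := by rw [e]
  -- raise to power a
  have step3 : S ^ a ≤ U * T ^ b := by
    have h := Real.rpow_le_rpow hS step2 ha0.le
    rwa [Real.mul_rpow (by positivity) (by positivity), ← Real.rpow_mul hU,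
      ← Real.rpow_mul hT.le, one_div_mul_cancel ha0.ne', Real.rpow_one,
      div_mul_cancel₀ _ ha0.ne'] at h
  rw [div_le_iff₀ (by positivity)]
  exact step3
end

section
/- Strict joint convexity of x^a/y^b (Lemma 'property of convex', strict part): Let a, b be real numbers with a − 1 > b > 0. Then the function f(x, y) = x^a / y^b is strictly convex on (0, ∞) × (0, ∞) ⊆ ℝ²: for all distinct points (x₁,y₁) ≠ (x₂,y₂) in this set and θ ∈ (0,1), f(θx₁ + (1−θ)x₂, θy₁ + (1−θ)y₂) < θ f(x₁,y₁) + (1−θ) f(x₂,y₂). -/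
set_option maxHeartbeats 1000000 in
/-- **Strict joint convexity of `x^a / y^b`** (Lemma `property of convex`, strict part).
For real `a, b` with `a − 1 > b > 0`, the function `(x, y) ↦ x^a / y^b` is strictly
convex on `(0, ∞) × (0, ∞)`. -/
theorem rpow_div_rpow_strictConvex (a b : ℝ) (hab : b < a - 1) (hb : 0 < b) :
    ∀ x₁ y₁ x₂ y₂ θ : ℝ, 0 < x₁ → 0 < y₁ → 0 < x₂ → 0 < y₂ →
      (x₁, y₁) ≠ (x₂, y₂) → 0 < θ → θ < 1 →
      (θ * x₁ + (1 - θ) * x₂) ^ a / (θ * y₁ + (1 - θ) * y₂) ^ b <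
        θ * (x₁ ^ a / y₁ ^ b) + (1 - θ) * (x₂ ^ a / y₂ ^ b) := by
  intro x₁ y₁ x₂ y₂ θ hx₁ hy₁ hx₂ hy₂ hne hθ0 hθ1
  have h1a : 1 < a := by linarith
  have ha : 0 < a := by linarith
  set dx := x₁ - x₂ with hdx
  set dy := y₁ - y₂ with hdy
  have hd : dx ≠ 0 ∨ dy ≠ 0 := by
    by_contra h
    push_neg at h
    apply hne
    have h1 : x₁ = x₂ := by have := h.1; rw [hdx] at this; linarith [sub_eq_zero.mp this]
    have h2 : y₁ = y₂ := by have := h.2; rw [hdy] at this; linarith [sub_eq_zero.mp this]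
    rw [h1, h2]
  set u : ℝ → ℝ := fun t => x₂ + t * dx with hu
  set v : ℝ → ℝ := fun t => y₂ + t * dy with hv
  set O : Set ℝ := {t | 0 < u t ∧ 0 < v t} with hO
  have hOopen : IsOpen O := by
    have : O = u ⁻¹' (Set.Ioi 0) ∩ v ⁻¹' (Set.Ioi 0) := rfl
    rw [this]
    have hcu : Continuous u := by rw [hu]; continuity
    have hcv : Continuous v := by rw [hv]; continuity
    exact (isOpen_Ioi.preimage hcu).inter (isOpen_Ioi.preimage hcv)
  have hIccO : Set.Icc (0:ℝ) 1 ⊆ O := by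
    intro t ht
    constructor
    · simp only [hu, hdx]
      nlinarith [mul_nonneg ht.1 hx₁.le, mul_nonneg (sub_nonneg.mpr ht.2) hx₂.le]
    · simp only [hv, hdy]
      nlinarith [mul_nonneg ht.1 hy₁.le, mul_nonneg (sub_nonneg.mpr ht.2) hy₂.le]
  have hderivu : ∀ t : ℝ, HasDerivAt u dx t := fun t => by
    rw [hu]
    simpa using ((hasDerivAt_id t).mul_const dx).const_add x₂
  have hderivv : ∀ t : ℝ, HasDerivAt v dy t := fun t => by
    rw [hv]
    simpa using ((hasDerivAt_id t).mul_const dy).const_add y₂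
  set φ : ℝ → ℝ := fun t => u t ^ a * v t ^ (-b) with hφ
  set φ' : ℝ → ℝ := fun t =>
    (a * dx) * (u t ^ (a-1) * v t ^ (-b)) + (-b * dy) * (u t ^ a * v t ^ (-b-1)) with hφ'
  set φ'' : ℝ → ℝ := fun t =>
    a*(a-1)*dx^2 * (u t ^ (a-2) * v t ^ (-b))
    - 2*a*b*dx*dy * (u t ^ (a-1) * v t ^ (-b-1))
    + b*(b+1)*dy^2 * (u t ^ a * v t ^ (-b-2)) with hφ''
  have hpow : ∀ (x p : ℝ), x ≠ 0 → ∀ t : ℝ,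
      True := fun _ _ _ _ => trivial
  have hDu : ∀ (p : ℝ) (t : ℝ), 0 < u t →
      HasDerivAt (fun s => u s ^ p) (p * u t ^ (p-1) * dx) t := by
    intro p t ht
    have h := (Real.hasDerivAt_rpow_const (p := p) (Or.inl ht.ne')).comp t (hderivu t)
    exact h
  have hDv : ∀ (p : ℝ) (t : ℝ), 0 < v t →
      HasDerivAt (fun s => v s ^ p) (p * v t ^ (p-1) * dy) t := by
    intro p t ht
    have h := (Real.hasDerivAt_rpow_const (p := p) (Or.inl ht.ne')).comp t (hderivv t)
    exact h
  have hD1 : ∀ t ∈ O, HasDerivAt φ (φ' t) t := by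
    intro t ht
    have h1 := hDu a t ht.1
    have h2 := hDv (-b) t ht.2
    have := h1.mul h2
    rw [hφ, hφ']
    refine this.congr_deriv ?_
    ring
  have hD2 : ∀ t ∈ O, HasDerivAt φ' (φ'' t) t := by
    intro t ht
    have h1 := (hDu (a-1) t ht.1).mul (hDv (-b) t ht.2)
    have h2 := (hDu a t ht.1).mul (hDv (-b-1) t ht.2)
    have h3 := (h1.const_mul (a * dx)).add (h2.const_mul (-b * dy))
    rw [hφ', hφ'']
    refine h3.congr_deriv ?_
    have e1 : a - 1 - 1 = a - 2 := by ring
    have e2 : -b - 1 - 1 = -b - 2 := by ring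
    rw [e1, e2]
    ring
  have hconv : StrictConvexOn ℝ (Set.Icc (0:ℝ) 1) φ := by
    apply strictConvexOn_of_deriv2_pos (convex_Icc 0 1)
    · intro t ht
      exact ((hD1 t (hIccO ht)).continuousAt).continuousWithinAt
    · intro t ht
      rw [interior_Icc] at ht
      have htO : t ∈ O := hIccO (Set.mem_Icc.mpr ⟨ht.1.le, ht.2.le⟩)
      have hder : deriv φ =ᶠ[nhds t] φ' := by
        filter_upwards [hOopen.mem_nhds htO] with s hs using (hD1 s hs).deriv
      have : deriv^[2] φ t = φ'' t := by
        simp only [Function.iterate_succ, Function.iterate_zero, Function.comp_apply, id_eq]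
        rw [hder.deriv_eq, (hD2 t htO).deriv]
      rw [this]
      -- positivity of φ'' t
      have hU : 0 < u t := htO.1
      have hV : 0 < v t := htO.2
      have hA : 0 < u t ^ (a-2) := Real.rpow_pos_of_pos hU _
      have hB : 0 < v t ^ (-b-2) := Real.rpow_pos_of_pos hV _
      have hU1 : u t ^ (a-1) = u t ^ (a-2) * u t := by
        rw [show a-1 = (a-2)+1 by ring, Real.rpow_add_one hU.ne']
      have hU2 : u t ^ a = u t ^ (a-2) * u t * u t := by
        rw [← Real.rpow_add_one hU.ne' (a-2), ← Real.rpow_add_one hU.ne',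
          show a - 2 + 1 + 1 = a by ring]
      have hV1 : v t ^ (-b-1) = v t ^ (-b-2) * v t := by
        rw [show -b-1 = (-b-2)+1 by ring, Real.rpow_add_one hV.ne']
      have hV2 : v t ^ (-b) = v t ^ (-b-2) * v t * v t := by
        rw [← Real.rpow_add_one hV.ne' (-b-2), ← Real.rpow_add_one hV.ne',
          show -b - 2 + 1 + 1 = -b by ring]
      have hQ : 0 < a*(a-1)*(v t * dx)^2 - 2*a*b*(u t * dx)*(v t * dy)
          + b*(b+1)*(u t * dy)^2 := by
        rcases hd with hdx0 | hdy0
        · rcases eq_or_ne dy 0 with h0 | h0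
          · have hS : 0 < (v t * dx)^2 := sq_pos_of_ne_zero (mul_ne_zero hV.ne' hdx0)
            rw [h0]
            nlinarith [mul_pos (mul_pos ha (by linarith : (0:ℝ) < a - 1)) hS]
          · have hT : 0 < (u t * dy)^2 := sq_pos_of_ne_zero (mul_ne_zero hU.ne' h0)
            nlinarith [sq_nonneg ((a-1)*(v t * dx) - b*(u t * dy)), hT,
              mul_pos (mul_pos hb (by linarith : (0:ℝ) < a - 1 - b)) hT]
        · have hT : 0 < (u t * dy)^2 := sq_pos_of_ne_zero (mul_ne_zero hU.ne' hdy0)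
          nlinarith [sq_nonneg ((a-1)*(v t * dx) - b*(u t * dy)), hT,
            mul_pos (mul_pos hb (by linarith : (0:ℝ) < a - 1 - b)) hT]
      have key : φ'' t = (u t ^ (a-2) * v t ^ (-b-2)) *
          (a*(a-1)*(v t * dx)^2 - 2*a*b*(u t * dx)*(v t * dy) + b*(b+1)*(u t * dy)^2) := by
        rw [hφ'']
        simp only []
        rw [hU1, hU2, hV1, hV2]
        ring
      rw [key]
      exact mul_pos (mul_pos hA hB) hQ
  have h01 : (1:ℝ) ∈ Set.Icc (0:ℝ) 1 := by norm_num
  have h00 : (0:ℝ) ∈ Set.Icc (0:ℝ) 1 := by norm_num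
  have hmain := hconv.2 h01 h00 one_ne_zero hθ0 (by linarith : 0 < 1 - θ) (by ring)
  simp only [smul_eq_mul, mul_one, mul_zero, add_zero] at hmain
  have hφθ : φ θ = (θ * x₁ + (1-θ) * x₂) ^ a / (θ * y₁ + (1-θ) * y₂) ^ b := by
    have htO : θ ∈ O := hIccO (Set.mem_Icc.mpr ⟨hθ0.le, hθ1.le⟩)
    rw [hφ]
    simp only []
    rw [Real.rpow_neg htO.2.le, ← div_eq_mul_inv]
    congr 2
    · simp only [hu, hdx]; ring
    · simp only [hv, hdy]; ring
  have hφ1 : φ 1 = x₁ ^ a / y₁ ^ b := by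
    rw [hφ]
    simp only []
    rw [Real.rpow_neg (by simp only [hv, hdy]; linarith : (0:ℝ) ≤ v 1), ← div_eq_mul_inv]
    congr 2
    · simp only [hu, hdx]; ring
    · simp only [hv, hdy]; ring
  have hφ0 : φ 0 = x₂ ^ a / y₂ ^ b := by
    rw [hφ]
    simp only []
    rw [Real.rpow_neg (by simp only [hv, hdy]; linarith : (0:ℝ) ≤ v 0), ← div_eq_mul_inv]
    congr 2
    · simp only [hu, hdx]; ring
    · simp only [hv, hdy]; ring
  rw [hφθ, hφ1, hφ0] at hmain
  exact hmain
end

section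
/- L¹ law of large numbers with truncation rate (Step 2 of the proof of Theorem 1): Let ε > 0, c > 0, and let ξ₁,…,ξ_m be i.i.d. random vectors in ℝ^K with E ξ₁ = 0 and E‖ξ₁‖^{1+ε} ≤ c. Then for every M > 0: E ‖ (1/m) Σ_{k=1}^{m} ξ_k ‖ ≤ M/√m + 2c/M^{ε}. In particular, with M = m^{1/(2(1+ε))}, E ‖ (1/m) Σ_{k=1}^{m} ξ_k ‖ ≤ (1 + 2c) · m^{−ε/(2(1+ε))}. -/
open MeasureTheory ProbabilityTheory
open scoped ENNReal BigOperators

private lemma sq_integral_le_integral_sq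
    {Ω : Type*} [MeasurableSpace Ω] (P : Measure Ω) [IsProbabilityMeasure P]
    (f : Ω → ℝ) (hf : Integrable f P) (hf2 : Integrable (fun ω => f ω ^ 2) P) :
    (∫ ω, f ω ∂P) ^ 2 ≤ ∫ ω, f ω ^ 2 ∂P := by
  set a := ∫ ω, f ω ∂P with ha
  have h1 : (fun ω => (f ω - a) ^ 2) = fun ω => (f ω ^ 2 - (2 * a) * f ω) + a ^ 2 := by
    funext ω; ring
  have h0 : (0 : ℝ) ≤ ∫ ω, (f ω - a) ^ 2 ∂P := integral_nonneg fun ω => sq_nonneg _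
  have hint1 : Integrable (fun ω => f ω ^ 2 - 2 * a * f ω) P := hf2.sub (hf.const_mul (2 * a))
  have hint1' : Integrable (fun ω => 2 * a * f ω) P := hf.const_mul (2 * a)
  rw [h1, integral_add hint1 (integrable_const _),
    integral_sub hf2 hint1', integral_const_mul, integral_const] at h0
  simp only [measure_univ, probReal_univ, ENNReal.toReal_one, smul_eq_mul, one_mul, ← ha] at h0
  nlinarith [h0]

private lemma abs_apply_le_norm {K : ℕ} (x : EuclideanSpace ℝ (Fin K)) (i : Fin K) :
    |x i| ≤ ‖x‖ := by
  rw [EuclideanSpace.norm_eq]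
  have h1 : |x i| = Real.sqrt (‖x i‖ ^ 2) := by
    rw [Real.sqrt_sq_eq_abs, abs_norm, Real.norm_eq_abs]
  rw [h1]
  exact Real.sqrt_le_sqrt (Finset.single_le_sum (fun j _ => sq_nonneg ‖x j‖) (Finset.mem_univ i))

private lemma aux_key
    {Ω : Type*} [MeasurableSpace Ω] (P : Measure Ω) [IsProbabilityMeasure P]
    (K m : ℕ) (hm : 1 ≤ m) (ε c : ℝ) (hε : 0 < ε) (hc : 0 < c)
    (ξ : Fin m → Ω → EuclideanSpace ℝ (Fin K))
    (hmeas : ∀ k, Measurable (ξ k))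
    (hindep : iIndepFun ξ P)
    (hint : ∀ k, Integrable (ξ k) P)
    (hmean : ∀ k, ∫ ω, ξ k ω ∂P = 0)
    (hmom : ∀ k, ∫⁻ ω, ENNReal.ofReal (‖ξ k ω‖ ^ (1 + ε)) ∂P ≤ ENNReal.ofReal c)
    (M : ℝ) (hM : 0 < M) :
    ∫ ω, ‖(m : ℝ)⁻¹ • ∑ k, ξ k ω‖ ∂P ≤ M / Real.sqrt m + 2 * c / M ^ ε := by
  classical
  have hmpos : (0 : ℝ) < m := by exact_mod_cast hm
  have hsetM : MeasurableSet {x : EuclideanSpace ℝ (Fin K) | ‖x‖ ≤ M} :=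
    measurableSet_le measurable_norm measurable_const
  set T : EuclideanSpace ℝ (Fin K) → EuclideanSpace ℝ (Fin K) :=
    fun x => if ‖x‖ ≤ M then x else 0 with hT
  have hTmeas : Measurable T := Measurable.ite hsetM measurable_id measurable_const
  have hTnorm : ∀ x, ‖T x‖ ≤ M := by
    intro x
    by_cases h : ‖x‖ ≤ M <;> simp [T, h, hM.le]
  have hTint : ∀ k, Integrable (fun ω => T (ξ k ω)) P := fun k =>
    (integrable_const M).mono' ((hTmeas.comp (hmeas k)).aestronglyMeasurable)
      (Filter.Eventually.of_forall fun ω => hTnorm _)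
  set μT : Fin m → EuclideanSpace ℝ (Fin K) := fun k => ∫ ω, T (ξ k ω) ∂P with hμT
  have hμTnorm : ∀ k, ‖μT k‖ ≤ M := by
    intro k
    refine le_trans (norm_integral_le_integral_norm _) ?_
    calc ∫ ω, ‖T (ξ k ω)‖ ∂P ≤ ∫ _, M ∂P :=
          integral_mono ((hTint k).norm) (integrable_const M) fun ω => hTnorm _
      _ = M := by simp
  set η : Fin m → Ω → EuclideanSpace ℝ (Fin K) := fun k ω => T (ξ k ω) - μT k with hη
  set ζ : Fin m → Ω → EuclideanSpace ℝ (Fin K) := fun k ω => ξ k ω - T (ξ k ω) + μT k with hζ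
  have hsplit : ∀ k ω, ξ k ω = η k ω + ζ k ω := by
    intro k ω; simp only [η, ζ]; abel
  have hηint : ∀ k, Integrable (η k) P := fun k => (hTint k).sub (integrable_const _)
  have hSint : ∀ k, Integrable (fun ω => ξ k ω - T (ξ k ω)) P := fun k => (hint k).sub (hTint k)
  have hζint : ∀ k, Integrable (ζ k) P := fun k => (hSint k).add (integrable_const _)
  have hημean : ∀ k, ∫ ω, η k ω ∂P = 0 := by
    intro k
    simp only [η]
    rw [integral_sub (hTint k) (integrable_const _), integral_const]
    simp [μT]
  -- Step A : triangle inequality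
  have hintsum_η : Integrable (fun ω => (m : ℝ)⁻¹ • ∑ k, η k ω) P :=
    (integrable_finset_sum Finset.univ fun k _ => hηint k).smul ((m : ℝ)⁻¹)
  have hintsum_ζ : Integrable (fun ω => (m : ℝ)⁻¹ • ∑ k, ζ k ω) P :=
    (integrable_finset_sum Finset.univ fun k _ => hζint k).smul ((m : ℝ)⁻¹)
  have hstepA : ∫ ω, ‖(m : ℝ)⁻¹ • ∑ k, ξ k ω‖ ∂P ≤
      ∫ ω, ‖(m : ℝ)⁻¹ • ∑ k, η k ω‖ ∂P + ∫ ω, ‖(m : ℝ)⁻¹ • ∑ k, ζ k ω‖ ∂P := by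
    have h1 : ∀ ω, ‖(m : ℝ)⁻¹ • ∑ k, ξ k ω‖ ≤
        ‖(m : ℝ)⁻¹ • ∑ k, η k ω‖ + ‖(m : ℝ)⁻¹ • ∑ k, ζ k ω‖ := by
      intro ω
      have h2 : (m : ℝ)⁻¹ • ∑ k, ξ k ω =
          (m : ℝ)⁻¹ • ∑ k, η k ω + (m : ℝ)⁻¹ • ∑ k, ζ k ω := by
        rw [← smul_add, ← Finset.sum_add_distrib]
        congr 1
        exact Finset.sum_congr rfl fun k _ => hsplit k ω
      rw [h2]; exact norm_add_le _ _
    calc ∫ ω, ‖(m : ℝ)⁻¹ • ∑ k, ξ k ω‖ ∂P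
        ≤ ∫ ω, (‖(m : ℝ)⁻¹ • ∑ k, η k ω‖ + ‖(m : ℝ)⁻¹ • ∑ k, ζ k ω‖) ∂P :=
          integral_mono ((integrable_finset_sum Finset.univ fun k _ => hint k).smul ((m : ℝ)⁻¹)).norm
            (hintsum_η.norm.add hintsum_ζ.norm) h1
      _ = _ := integral_add hintsum_η.norm hintsum_ζ.norm
  -- Step B : tail estimate
  have hMεpos : (0 : ℝ) < M ^ ε := Real.rpow_pos_of_pos hM ε
  have hζbound : ∀ k, ∫ ω, ‖ζ k ω‖ ∂P ≤ 2 * c / M ^ ε := by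
    intro k
    have hpt : ∀ ω, ‖ξ k ω - T (ξ k ω)‖ ≤ ‖ξ k ω‖ ^ (1 + ε) * (M ^ ε)⁻¹ := by
      intro ω
      by_cases h : ‖ξ k ω‖ ≤ M
      · simp only [T, if_pos h, sub_self, norm_zero]
        positivity
      · push_neg at h
        simp only [T, if_neg (not_le.mpr h), sub_zero]
        rw [← div_eq_mul_inv, le_div_iff₀ hMεpos]
        calc ‖ξ k ω‖ * M ^ ε ≤ ‖ξ k ω‖ * ‖ξ k ω‖ ^ ε :=
              mul_le_mul_of_nonneg_left (Real.rpow_le_rpow hM.le h.le hε.le) (norm_nonneg _)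
          _ = ‖ξ k ω‖ ^ (1 + ε) := by
              rw [Real.rpow_add (lt_trans hM h), Real.rpow_one]
    have htail : ∫ ω, ‖ξ k ω - T (ξ k ω)‖ ∂P ≤ c / M ^ ε := by
      rw [integral_eq_lintegral_of_nonneg_ae (Filter.Eventually.of_forall fun ω => norm_nonneg _)
        (hSint k).norm.aestronglyMeasurable]
      refine ENNReal.toReal_le_of_le_ofReal (by positivity) ?_
      calc ∫⁻ ω, ENNReal.ofReal ‖ξ k ω - T (ξ k ω)‖ ∂P
          ≤ ∫⁻ ω, ENNReal.ofReal (‖ξ k ω‖ ^ (1 + ε)) * ENNReal.ofReal ((M ^ ε)⁻¹) ∂P := by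
            refine lintegral_mono fun ω => ?_
            rw [← ENNReal.ofReal_mul (by positivity)]
            exact ENNReal.ofReal_le_ofReal (hpt ω)
        _ = (∫⁻ ω, ENNReal.ofReal (‖ξ k ω‖ ^ (1 + ε)) ∂P) * ENNReal.ofReal ((M ^ ε)⁻¹) :=
            lintegral_mul_const _ (ENNReal.measurable_ofReal.comp
              ((hmeas k).norm.pow_const _))
        _ ≤ ENNReal.ofReal c * ENNReal.ofReal ((M ^ ε)⁻¹) := mul_le_mul_left (hmom k) _
        _ = ENNReal.ofReal (c / M ^ ε) := by
            rw [← ENNReal.ofReal_mul hc.le, div_eq_mul_inv]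
    have hμeq : μT k = - ∫ ω, (ξ k ω - T (ξ k ω)) ∂P := by
      rw [integral_sub (hint k) (hTint k), hmean k]
      simp [μT]
    have hμbound : ‖μT k‖ ≤ c / M ^ ε := by
      rw [hμeq, norm_neg]
      exact le_trans (norm_integral_le_integral_norm _) htail
    have hSnormc : Integrable (fun ω => ‖ξ k ω - T (ξ k ω)‖ + ‖μT k‖) P :=
      (hSint k).norm.add (integrable_const _)
    calc ∫ ω, ‖ζ k ω‖ ∂P ≤ ∫ ω, (‖ξ k ω - T (ξ k ω)‖ + ‖μT k‖) ∂P :=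
          integral_mono (hζint k).norm hSnormc fun ω => norm_add_le _ _
      _ = ∫ ω, ‖ξ k ω - T (ξ k ω)‖ ∂P + ‖μT k‖ := by
          rw [integral_add (hSint k).norm (integrable_const _), integral_const]
          simp
      _ ≤ c / M ^ ε + c / M ^ ε := add_le_add htail hμbound
      _ = 2 * c / M ^ ε := by ring
  have hstepB : ∫ ω, ‖(m : ℝ)⁻¹ • ∑ k, ζ k ω‖ ∂P ≤ 2 * c / M ^ ε := by
    have h1 : ∫ ω, ‖(m : ℝ)⁻¹ • ∑ k, ζ k ω‖ ∂P = (m : ℝ)⁻¹ * ∫ ω, ‖∑ k, ζ k ω‖ ∂P := by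
      simp_rw [norm_smul, norm_inv, Real.norm_natCast]
      rw [integral_const_mul]
    rw [h1]
    have h2 : ∫ ω, ‖∑ k, ζ k ω‖ ∂P ≤ m * (2 * c / M ^ ε) := by
      calc ∫ ω, ‖∑ k, ζ k ω‖ ∂P ≤ ∫ ω, ∑ k, ‖ζ k ω‖ ∂P :=
            integral_mono (integrable_finset_sum _ fun k _ => hζint k).norm
              (integrable_finset_sum _ fun k _ => (hζint k).norm) fun ω => norm_sum_le _ _
        _ = ∑ k, ∫ ω, ‖ζ k ω‖ ∂P := integral_finset_sum _ fun k _ => (hζint k).norm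
        _ ≤ ∑ _k : Fin m, (2 * c / M ^ ε) := Finset.sum_le_sum fun k _ => hζbound k
        _ = m * (2 * c / M ^ ε) := by simp [Finset.sum_const, mul_comm]
    calc (m : ℝ)⁻¹ * ∫ ω, ‖∑ k, ζ k ω‖ ∂P ≤ (m : ℝ)⁻¹ * (m * (2 * c / M ^ ε)) :=
          mul_le_mul_of_nonneg_left h2 (by positivity)
      _ = 2 * c / M ^ ε := by field_simp
  -- Step C : variance estimate
  have hηnorm : ∀ k ω, ‖η k ω‖ ≤ 2 * M := by
    intro k ω
    refine le_trans (norm_sub_le _ _) ?_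
    have h1 := hTnorm (ξ k ω)
    have h2 := hμTnorm k
    linarith
  have hηmeasf : ∀ k, Measurable (η k) := fun k =>
    (hTmeas.comp (hmeas k)).sub measurable_const
  have hinner_int : ∀ j k, Integrable (fun ω => (inner ℝ (η j ω) (η k ω) : ℝ)) P := by
    intro j k
    refine (integrable_const ((2 * M) * (2 * M))).mono'
      ((hηmeasf j).inner (hηmeasf k)).aestronglyMeasurable
      (Filter.Eventually.of_forall fun ω => ?_)
    rw [Real.norm_eq_abs]
    refine le_trans (abs_real_inner_le_norm _ _) ?_
    exact mul_le_mul (hηnorm j ω) (hηnorm k ω) (norm_nonneg _) (by linarith)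
  -- components of η are centered
  have hηcomp_mean : ∀ (l : Fin m) (i : Fin K), ∫ ω, η l ω i ∂P = 0 := by
    intro l i
    have h1 : ∫ ω, (EuclideanSpace.proj (𝕜 := ℝ) i) (η l ω) ∂P =
        (EuclideanSpace.proj (𝕜 := ℝ) i) (∫ ω, η l ω ∂P) :=
      ContinuousLinearMap.integral_comp_comm _ (hηint l)
    simpa [hημean l] using h1
  -- off-diagonal terms vanish
  have hcross : ∀ j k, j ≠ k → ∫ ω, (inner ℝ (η j ω) (η k ω) : ℝ) ∂P = 0 := by
    intro j k hjk
    have hexpand : ∀ ω, (inner ℝ (η j ω) (η k ω) : ℝ) = ∑ i, η j ω i * η k ω i := by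
      intro ω
      simp [PiLp.inner_apply, RCLike.inner_apply, conj_trivial]
      exact Finset.sum_congr rfl fun i _ => mul_comm _ _
    have hcompmeas : ∀ (l : Fin m) (i : Fin K), Measurable (fun ω => η l ω i) := fun l i =>
      (EuclideanSpace.proj (𝕜 := ℝ) i).measurable.comp (hηmeasf l)
    have hcompbd : ∀ (l : Fin m) (i : Fin K) ω, |η l ω i| ≤ 2 * M := fun l i ω =>
      le_trans (abs_apply_le_norm _ i) (hηnorm l ω)
    have hcompint : ∀ (j k : Fin m) (i : Fin K),
        Integrable (fun ω => η j ω i * η k ω i) P := by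
      intro j' k' i
      refine (integrable_const ((2 * M) * (2 * M))).mono'
        ((hcompmeas j' i).mul (hcompmeas k' i)).aestronglyMeasurable
        (Filter.Eventually.of_forall fun ω => ?_)
      rw [Real.norm_eq_abs, abs_mul]
      exact mul_le_mul (hcompbd j' i ω) (hcompbd k' i ω) (abs_nonneg _) (by linarith)
    simp only [hexpand]
    rw [integral_finset_sum _ fun i _ => hcompint j k i]
    refine Finset.sum_eq_zero fun i _ => ?_
    have hindjk : IndepFun (ξ j) (ξ k) P := hindep.indepFun hjk
    have hgi : ∀ l : Fin m,
        Measurable (fun x : EuclideanSpace ℝ (Fin K) => (T x - μT l) i) := fun l =>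
      (EuclideanSpace.proj (𝕜 := ℝ) i).measurable.comp (hTmeas.sub measurable_const)
    have hindfun : IndepFun (fun ω => η j ω i) (fun ω => η k ω i) P :=
      hindjk.comp (hgi j) (hgi k)
    have := IndepFun.integral_mul_eq_mul_integral hindfun (hcompmeas j i).aestronglyMeasurable
      (hcompmeas k i).aestronglyMeasurable
    calc ∫ ω, η j ω i * η k ω i ∂P
        = (∫ ω, η j ω i ∂P) * ∫ ω, η k ω i ∂P := this
      _ = 0 := by rw [hηcomp_mean j i, zero_mul]
  -- diagonal terms
  have hdiag : ∀ k, ∫ ω, (inner ℝ (η k ω) (η k ω) : ℝ) ∂P ≤ M ^ 2 := by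
    intro k
    have hTsq_int : Integrable (fun ω => ‖T (ξ k ω)‖ ^ 2) P := by
      refine (integrable_const (M ^ 2)).mono'
        ((hTmeas.comp (hmeas k)).norm.pow_const 2).aestronglyMeasurable
        (Filter.Eventually.of_forall fun ω => ?_)
      rw [Real.norm_eq_abs, abs_of_nonneg (sq_nonneg _)]
      exact pow_le_pow_left₀ (norm_nonneg _) (hTnorm _) 2
    have hTinner_int : Integrable (fun ω => (inner ℝ (μT k) (T (ξ k ω)) : ℝ)) P := by
      refine (integrable_const (M * M)).mono'
        (Measurable.inner measurable_const (hTmeas.comp (hmeas k))).aestronglyMeasurable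
        (Filter.Eventually.of_forall fun ω => ?_)
      rw [Real.norm_eq_abs]
      exact le_trans (abs_real_inner_le_norm _ _)
        (mul_le_mul (hμTnorm k) (hTnorm _) (norm_nonneg _) hM.le)
    have hexp : (fun ω => (inner ℝ (η k ω) (η k ω) : ℝ)) =
        fun ω => (‖T (ξ k ω)‖ ^ 2 - 2 * (inner ℝ (μT k) (T (ξ k ω)) : ℝ)) + ‖μT k‖ ^ 2 := by
      funext ω
      rw [real_inner_self_eq_norm_sq]
      simp only [η]
      rw [norm_sub_sq_real]
      rw [real_inner_comm]
    have hd1 : Integrable (fun ω => ‖T (ξ k ω)‖ ^ 2 - 2 * (inner ℝ (μT k) (T (ξ k ω)) : ℝ)) P :=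
      hTsq_int.sub (hTinner_int.const_mul 2)
    have hd2 : Integrable (fun ω => 2 * (inner ℝ (μT k) (T (ξ k ω)) : ℝ)) P :=
      hTinner_int.const_mul 2
    rw [hexp, integral_add hd1 (integrable_const _),
      integral_sub hTsq_int hd2, integral_const_mul, integral_const]
    have hinteq : ∫ ω, (inner ℝ (μT k) (T (ξ k ω)) : ℝ) ∂P = ‖μT k‖ ^ 2 := by
      rw [integral_inner (hTint k)]
      exact real_inner_self_eq_norm_sq (μT k)
    have hTsq_le : ∫ ω, ‖T (ξ k ω)‖ ^ 2 ∂P ≤ M ^ 2 := by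
      calc ∫ ω, ‖T (ξ k ω)‖ ^ 2 ∂P ≤ ∫ _, M ^ 2 ∂P :=
            integral_mono hTsq_int (integrable_const _) fun ω =>
              pow_le_pow_left₀ (norm_nonneg _) (hTnorm _) 2
        _ = M ^ 2 := by simp
    rw [hinteq]
    simp only [measure_univ, probReal_univ, ENNReal.toReal_one, smul_eq_mul, one_mul]
    nlinarith [sq_nonneg ‖μT k‖]
  -- sum of squares
  have hsumsq : ∫ ω, ‖∑ k, η k ω‖ ^ 2 ∂P ≤ m * M ^ 2 := by
    have hinner : ∀ ω, ‖∑ k, η k ω‖ ^ 2 = ∑ j, ∑ k, (inner ℝ (η j ω) (η k ω) : ℝ) := by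
      intro ω
      rw [← real_inner_self_eq_norm_sq, sum_inner]
      exact Finset.sum_congr rfl fun j _ => inner_sum _ _ _
    calc ∫ ω, ‖∑ k, η k ω‖ ^ 2 ∂P
        = ∫ ω, ∑ j, ∑ k, (inner ℝ (η j ω) (η k ω) : ℝ) ∂P := by
          exact integral_congr_ae (Filter.Eventually.of_forall fun ω => hinner ω)
      _ = ∑ j, ∑ k, ∫ ω, (inner ℝ (η j ω) (η k ω) : ℝ) ∂P := by
          rw [integral_finset_sum _ fun j _ =>
            integrable_finset_sum _ fun k _ => hinner_int j k]
          exact Finset.sum_congr rfl fun j _ =>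
            integral_finset_sum _ fun k _ => hinner_int j k
      _ = ∑ j, ∫ ω, (inner ℝ (η j ω) (η j ω) : ℝ) ∂P := by
          refine Finset.sum_congr rfl fun j _ => ?_
          rw [Finset.sum_eq_single j]
          · exact fun k _ hkj => hcross j k (Ne.symm hkj)
          · intro h; exact absurd (Finset.mem_univ j) h
      _ ≤ ∑ _j : Fin m, M ^ 2 := Finset.sum_le_sum fun j _ => hdiag j
      _ = m * M ^ 2 := by simp [Finset.sum_const, mul_comm]
  -- Jensen
  have hsumη_int : Integrable (fun ω => ∑ k, η k ω) P :=
    integrable_finset_sum _ fun k _ => hηint k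
  have hsumη_bd : ∀ ω, ‖∑ k, η k ω‖ ≤ m * (2 * M) := by
    intro ω
    refine le_trans (norm_sum_le _ _) ?_
    calc ∑ k, ‖η k ω‖ ≤ ∑ _k : Fin m, (2 * M) := Finset.sum_le_sum fun k _ => hηnorm k ω
      _ = m * (2 * M) := by simp [Finset.sum_const, mul_comm]
  have hsumη_meas : Measurable (fun ω => ∑ k, η k ω) :=
    Finset.measurable_sum _ fun k _ => hηmeasf k
  have hf2int : Integrable (fun ω => ‖∑ k, η k ω‖ ^ 2) P := by
    refine (integrable_const ((m * (2 * M)) ^ 2)).mono'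
      (hsumη_meas.norm.pow_const 2).aestronglyMeasurable
      (Filter.Eventually.of_forall fun ω => ?_)
    rw [Real.norm_eq_abs, abs_of_nonneg (sq_nonneg _)]
    exact pow_le_pow_left₀ (norm_nonneg _) (hsumη_bd ω) 2
  have hJ : ∫ ω, ‖∑ k, η k ω‖ ∂P ≤ Real.sqrt m * M := by
    have h1 := sq_integral_le_integral_sq P _ hsumη_int.norm hf2int
    have h2 : (∫ ω, ‖∑ k, η k ω‖ ∂P) ^ 2 ≤ (Real.sqrt m * M) ^ 2 := by
      have : (Real.sqrt m * M) ^ 2 = m * M ^ 2 := by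
        rw [mul_pow, Real.sq_sqrt hmpos.le]
      rw [this]
      exact le_trans h1 hsumsq
    have h3 : (0 : ℝ) ≤ ∫ ω, ‖∑ k, η k ω‖ ∂P := integral_nonneg fun ω => norm_nonneg _
    have h4 : (0 : ℝ) ≤ Real.sqrt m * M := by positivity
    calc ∫ ω, ‖∑ k, η k ω‖ ∂P = Real.sqrt ((∫ ω, ‖∑ k, η k ω‖ ∂P) ^ 2) :=
          (Real.sqrt_sq h3).symm
      _ ≤ Real.sqrt ((Real.sqrt ↑m * M) ^ 2) := Real.sqrt_le_sqrt h2
      _ = Real.sqrt ↑m * M := Real.sqrt_sq h4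
  have hstepC : ∫ ω, ‖(m : ℝ)⁻¹ • ∑ k, η k ω‖ ∂P ≤ M / Real.sqrt m := by
    have h1 : ∫ ω, ‖(m : ℝ)⁻¹ • ∑ k, η k ω‖ ∂P = (m : ℝ)⁻¹ * ∫ ω, ‖∑ k, η k ω‖ ∂P := by
      simp_rw [norm_smul, norm_inv, Real.norm_natCast]
      rw [integral_const_mul]
    rw [h1]
    have hsq : Real.sqrt m * Real.sqrt m = m := Real.mul_self_sqrt hmpos.le
    have hsqpos : (0 : ℝ) < Real.sqrt m := Real.sqrt_pos.mpr hmpos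
    calc (m : ℝ)⁻¹ * ∫ ω, ‖∑ k, η k ω‖ ∂P ≤ (m : ℝ)⁻¹ * (Real.sqrt m * M) :=
          mul_le_mul_of_nonneg_left hJ (by positivity)
      _ = M / Real.sqrt m := by
          rw [eq_div_iff (ne_of_gt hsqpos)]
          have hre : (m : ℝ)⁻¹ * (Real.sqrt m * M) * Real.sqrt m =
              (m : ℝ)⁻¹ * (Real.sqrt m * Real.sqrt m) * M := by ring
          rw [hre, hsq, inv_mul_cancel₀ (ne_of_gt hmpos), one_mul]
  linarith [hstepA, hstepB, hstepC]

/-- **L¹ law of large numbers with truncation rate** (Step 2 of the proof of Theorem 1).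
If `ξ₁, …, ξ_m` are i.i.d. mean-zero random vectors in `ℝ^K` with
`E‖ξ₁‖^{1+ε} ≤ c`, then `E‖(1/m) Σ ξ_k‖ ≤ M/√m + 2c/M^ε` for every `M > 0`; in
particular, taking `M = m^{1/(2(1+ε))}` yields `E‖(1/m) Σ ξ_k‖ ≤ (1+2c) m^{-ε/(2(1+ε))}`. -/
theorem l1_lln_with_truncation_rate
    {Ω : Type*} [MeasurableSpace Ω] (P : Measure Ω) [IsProbabilityMeasure P]
    (K m : ℕ) (hm : 1 ≤ m) (ε c : ℝ) (hε : 0 < ε) (hc : 0 < c)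
    (ξ : Fin m → Ω → EuclideanSpace ℝ (Fin K))
    (hmeas : ∀ k, Measurable (ξ k))
    (hindep : iIndepFun ξ P)
    (hident : ∀ k l, IdentDistrib (ξ k) (ξ l) P P)
    (hint : ∀ k, Integrable (ξ k) P)
    (hmean : ∀ k, ∫ ω, ξ k ω ∂P = 0)
    (hmom : ∀ k, ∫⁻ ω, ENNReal.ofReal (‖ξ k ω‖ ^ (1 + ε)) ∂P ≤ ENNReal.ofReal c) :
    (∀ M : ℝ, 0 < M →
      ∫ ω, ‖(m : ℝ)⁻¹ • ∑ k, ξ k ω‖ ∂P ≤ M / Real.sqrt m + 2 * c / M ^ ε) ∧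
    ∫ ω, ‖(m : ℝ)⁻¹ • ∑ k, ξ k ω‖ ∂P ≤
      (1 + 2 * c) * (m : ℝ) ^ (-(ε / (2 * (1 + ε)))) := by
  have hmpos : (0 : ℝ) < m := by exact_mod_cast hm
  have hεne : (1 : ℝ) + ε ≠ 0 := by linarith
  refine ⟨fun M hM => aux_key P K m hm ε c hε hc ξ hmeas hindep hint hmean hmom M hM, ?_⟩
  set a : ℝ := (2 * (1 + ε))⁻¹ with ha
  have hMpos : (0 : ℝ) < (m : ℝ) ^ a := Real.rpow_pos_of_pos hmpos a
  have h := aux_key P K m hm ε c hε hc ξ hmeas hindep hint hmean hmom ((m : ℝ) ^ a) hMpos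
  refine h.trans (le_of_eq ?_)
  have hb : a - 1 / 2 = -(ε / (2 * (1 + ε))) := by
    rw [ha]; field_simp; ring
  have hb2 : a * ε = ε / (2 * (1 + ε)) := by
    rw [ha]; field_simp
  have hsqrt : Real.sqrt m = (m : ℝ) ^ ((1 : ℝ) / 2) := Real.sqrt_eq_rpow _
  have h1 : (m : ℝ) ^ a / Real.sqrt m = (m : ℝ) ^ (-(ε / (2 * (1 + ε)))) := by
    rw [hsqrt, ← Real.rpow_sub hmpos, hb]
  have h2 : 2 * c / ((m : ℝ) ^ a) ^ ε = 2 * c * (m : ℝ) ^ (-(ε / (2 * (1 + ε)))) := by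
    rw [← Real.rpow_mul hmpos.le, hb2, div_eq_mul_inv, ← Real.rpow_neg hmpos.le]
  rw [h1, h2]
  ring
end
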